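/- Let K be ℝ or ℂ, d ≥ 1, and let 𝒜 be an irreducible compact set of d×d matrices over K. Then a real number ρ ≥ 0 equals the joint spectral radius ρ(𝒜) if and only if there exists a norm ‖·‖_b on K^d such that ρ·‖x‖_b = max_{A∈𝒜} ‖Ax‖_b for all x ∈ K^d. -/

import Mathlib

open Filter Set

namespace JSRPaper

section Defs

variable {d : ℕ} {K : Type*} [RCLike K]

/-- `N` is a norm on `Fin d → K` (`K` is `ℝ` or `ℂ`). -/
def IsNorm (N : (Fin d → K) → ℝ) : Prop :=
  (∀ x, 0 ≤ N x) ∧ (∀ x, N x = 0 ↔ x = 0) ∧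
    (∀ (c : K) (x : Fin d → K), N (c • x) = ‖c‖ * N x) ∧
    (∀ x y, N (x + y) ≤ N x + N y)

/-- Operator norm of a matrix induced by the norm `N` on `Fin d → K`. -/
noncomputable def opNorm (N : (Fin d → K) → ℝ) (A : Matrix (Fin d) (Fin d) K) : ℝ :=
  sSup {r : ℝ | ∃ x : Fin d → K, N x = 1 ∧ r = N (A.mulVec x)}

/-- `‖𝒜‖ = sup_{A ∈ 𝒜} ‖A‖`. -/
noncomputable def setNorm (N : (Fin d → K) → ℝ) (𝒜 : Set (Matrix (Fin d) (Fin d) K)) : ℝ :=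
  sSup (opNorm N '' 𝒜)

/-- `𝒜^n`: the set of all products of `n` matrices from `𝒜`, with `𝒜^0 = {I}`. -/
def prodSet (𝒜 : Set (Matrix (Fin d) (Fin d) K)) : ℕ → Set (Matrix (Fin d) (Fin d) K)
  | 0 => {1}
  | n + 1 => {M | ∃ A ∈ 𝒜, ∃ P ∈ prodSet 𝒜 n, M = A * P}

/-- The joint spectral radius `ρ(𝒜) = limsup_{n → ∞} ‖𝒜^n‖^{1/n}`. -/
noncomputable def jsr (N : (Fin d → K) → ℝ) (𝒜 : Set (Matrix (Fin d) (Fin d) K)) : ℝ :=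
  Filter.limsup (fun n : ℕ => setNorm N (prodSet 𝒜 n) ^ ((n : ℝ)⁻¹)) Filter.atTop

/-- `𝒜` is irreducible: the matrices of `𝒜` have no common invariant subspace
other than `{0}` and `K^d`. -/
def IsIrred (𝒜 : Set (Matrix (Fin d) (Fin d) K)) : Prop :=
  ∀ W : Submodule K (Fin d → K), (∀ A ∈ 𝒜, ∀ x ∈ W, A.mulVec x ∈ W) → W = ⊥ ∨ W = ⊤

/-- `ℬ` is a bounded set of matrices (w.r.t. the operator norm induced by `N`). -/
def IsBdd (N : (Fin d → K) → ℝ) (ℬ : Set (Matrix (Fin d) (Fin d) K)) : Prop :=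
  ∃ C : ℝ, ∀ B ∈ ℬ, opNorm N B ≤ C

/-- The `p`-measure of irreducibility `χ_p(𝒜)`:
`inf_{‖x‖=1} sup { t : ball(0,t) ⊆ conv(𝒜_p(x) ∪ 𝒜_p(-x)) }`, where
`𝒜_p = ⋃_{k ≤ p} 𝒜^k`. -/
noncomputable def chi (N : (Fin d → K) → ℝ) (𝒜 : Set (Matrix (Fin d) (Fin d) K)) (p : ℕ) : ℝ :=
  sInf {s : ℝ | ∃ x : Fin d → K, N x = 1 ∧
    s = sSup {t : ℝ | {y : Fin d → K | N y ≤ t} ⊆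
      convexHull ℝ
        (((fun A : Matrix (Fin d) (Fin d) K => A.mulVec x) ''
            ⋃ k ∈ Finset.range (p + 1), prodSet 𝒜 k) ∪
          ((fun A : Matrix (Fin d) (Fin d) K => A.mulVec (-x)) ''
            ⋃ k ∈ Finset.range (p + 1), prodSet 𝒜 k))}}

/-- `ν_p(𝒜) = max{1, ‖𝒜‖^p} / χ_p(𝒜)`. -/
noncomputable def nu (N : (Fin d → K) → ℝ) (𝒜 : Set (Matrix (Fin d) (Fin d) K)) (p : ℕ) : ℝ :=
  max 1 (setNorm N 𝒜 ^ p) / chi N 𝒜 p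

/-- The Hausdorff distance between two matrix sets, w.r.t. the operator norm induced by `N`. -/
noncomputable def hdist (N : (Fin d → K) → ℝ) (𝒜 ℬ : Set (Matrix (Fin d) (Fin d) K)) : ℝ :=
  max (sSup ((fun A => sInf ((fun B => opNorm N (A - B)) '' ℬ)) '' 𝒜))
      (sSup ((fun B => sInf ((fun A => opNorm N (A - B)) '' 𝒜)) '' ℬ))

/-- `Nb` is a Barabanov norm for `𝒜`: it is a norm on `K^d` and
`ρ(𝒜)·‖x‖_b = max_{A ∈ 𝒜} ‖A x‖_b` for all `x` (`ρ(𝒜)` computed w.r.t. the reference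
norm `N`; its value does not depend on this choice). -/
def IsBarabanov (N Nb : (Fin d → K) → ℝ) (𝒜 : Set (Matrix (Fin d) (Fin d) K)) : Prop :=
  IsNorm Nb ∧ ∀ x : Fin d → K,
    jsr N 𝒜 * Nb x = sSup {r : ℝ | ∃ A ∈ 𝒜, r = Nb (A.mulVec x)}

/-- The eccentricity `ecc(N', N'') = (max_{x ≠ 0} N' x / N'' x) / (min_{x ≠ 0} N' x / N'' x)`. -/
noncomputable def eccen (N' N'' : (Fin d → K) → ℝ) : ℝ :=
  sSup {r : ℝ | ∃ x : Fin d → K, x ≠ 0 ∧ r = N' x / N'' x} /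
    sInf {r : ℝ | ∃ x : Fin d → K, x ≠ 0 ∧ r = N' x / N'' x}

end Defs

section Aux

variable {d : ℕ} {K : Type*} [RCLike K]

lemma IsNorm.nonneg {N : (Fin d → K) → ℝ} (hN : IsNorm N) (x : Fin d → K) : 0 ≤ N x := hN.1 x

lemma IsNorm.zero {N : (Fin d → K) → ℝ} (hN : IsNorm N) : N 0 = 0 := (hN.2.1 0).2 rfl

lemma IsNorm.pos {N : (Fin d → K) → ℝ} (hN : IsNorm N) {x : Fin d → K} (hx : x ≠ 0) :
    0 < N x := by
  rcases lt_or_eq_of_le (hN.nonneg x) with h | h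
  · exact h
  · exact absurd ((hN.2.1 x).1 h.symm) hx

lemma IsNorm.smul' {N : (Fin d → K) → ℝ} (hN : IsNorm N) (c : K) (x : Fin d → K) :
    N (c • x) = ‖c‖ * N x := hN.2.2.1 c x

lemma IsNorm.add_le {N : (Fin d → K) → ℝ} (hN : IsNorm N) (x y : Fin d → K) :
    N (x + y) ≤ N x + N y := hN.2.2.2 x y

lemma IsNorm.sum_le {N : (Fin d → K) → ℝ} (hN : IsNorm N) {ι : Type*} (s : Finset ι)
    (f : ι → Fin d → K) : N (∑ i ∈ s, f i) ≤ ∑ i ∈ s, N (f i) := by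
  classical
  induction s using Finset.induction_on with
  | empty => simp [hN.zero]
  | insert _ _ hx ih =>
    rename_i a s
    rw [Finset.sum_insert hx, Finset.sum_insert hx]
    exact le_trans (hN.add_le _ _) (by linarith)

lemma IsNorm.sub_le' {N : (Fin d → K) → ℝ} (hN : IsNorm N) (x y : Fin d → K) :
    N x ≤ N y + N (x - y) := by
  have := hN.add_le y (x - y)
  simpa using this

/-- Upper bound of a norm by the sup norm. -/
lemma IsNorm.exists_upper {N : (Fin d → K) → ℝ} (hN : IsNorm N) :
    ∃ C : ℝ, 0 < C ∧ ∀ x, N x ≤ C * ‖x‖ := by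
  classical
  refine ⟨(∑ i : Fin d, N (fun j => if i = j then 1 else 0)) + 1, by
    have : 0 ≤ ∑ i : Fin d, N (fun j => if i = j then 1 else 0) :=
      Finset.sum_nonneg fun i _ => hN.nonneg _
    linarith, ?_⟩
  intro x
  have hx : x = ∑ i : Fin d, x i • fun j => if i = j then (1:K) else 0 := pi_eq_sum_univ x
  calc N x = N (∑ i : Fin d, x i • fun j => if i = j then (1:K) else 0) := by rw [← hx]
    _ ≤ ∑ i : Fin d, N (x i • fun j => if i = j then (1:K) else 0) := hN.sum_le _ _
    _ = ∑ i : Fin d, ‖x i‖ * N (fun j => if i = j then (1:K) else 0) := by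
        simp [hN.smul']
    _ ≤ ∑ i : Fin d, ‖x‖ * N (fun j => if i = j then (1:K) else 0) := by
        refine Finset.sum_le_sum fun i _ => ?_
        exact mul_le_mul_of_nonneg_right (norm_le_pi_norm x i) (hN.nonneg _)
    _ = (∑ i : Fin d, N (fun j => if i = j then (1:K) else 0)) * ‖x‖ := by
        rw [Finset.sum_mul]
        exact Finset.sum_congr rfl fun i _ => mul_comm _ _
    _ ≤ ((∑ i : Fin d, N (fun j => if i = j then (1:K) else 0)) + 1) * ‖x‖ := by
        have := norm_nonneg x; nlinarith

lemma IsNorm.continuous {N : (Fin d → K) → ℝ} (hN : IsNorm N) : Continuous N := by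
  obtain ⟨C, hC, h⟩ := hN.exists_upper
  rw [Metric.continuous_iff]
  intro x ε hε
  refine ⟨ε / C, by positivity, fun y hy => ?_⟩
  have h1 : N y ≤ N x + N (y - x) := hN.sub_le' y x
  have h2 : N x ≤ N y + N (x - y) := hN.sub_le' x y
  have h3 : N (y - x) ≤ C * ‖y - x‖ := h _
  have h4 : N (x - y) ≤ C * ‖x - y‖ := h _
  have h5 : ‖x - y‖ = ‖y - x‖ := by rw [← norm_neg]; ring_nf
  have hd' : dist y x = ‖y - x‖ := dist_eq_norm y x
  rw [Real.dist_eq]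
  rw [hd'] at hy
  have : C * ‖y - x‖ < C * (ε / C) := by
    exact mul_lt_mul_of_pos_left hy hC
  rw [mul_div_cancel₀ _ (ne_of_gt hC)] at this
  rw [abs_lt]
  constructor <;> nlinarith

end Aux
section AuxB

variable {d : ℕ} {K : Type*} [RCLike K]

lemma norm_coe_real (r : ℝ) : ‖((r : ℝ) : K)‖ = |r| := RCLike.norm_ofReal r

/-- scaling a nonzero vector to the `N`-unit sphere -/
lemma IsNorm.unit_scale {N : (Fin d → K) → ℝ} (hN : IsNorm N) {x : Fin d → K} (hx : x ≠ 0) :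
    N ((((N x)⁻¹ : ℝ) : K) • x) = 1 := by
  rw [hN.smul', norm_coe_real, abs_of_nonneg (inv_nonneg.2 (hN.nonneg x))]
  exact inv_mul_cancel₀ (ne_of_gt (hN.pos hx))

lemma unit_scale_smul {x : Fin d → K} (c : ℝ) (hc : c ≠ 0) :
    ((c : K)) • (((c⁻¹ : ℝ) : K) • x) = x := by
  rw [smul_smul, ← RCLike.ofReal_mul, mul_inv_cancel₀ hc]
  simp

lemma IsNorm.exists_unit {N : (Fin d → K) → ℝ} (hN : IsNorm N) (hd : 1 ≤ d) :
    ∃ x : Fin d → K, N x = 1 := by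
  have : Nonempty (Fin d) := ⟨⟨0, hd⟩⟩
  have hx : (fun _ : Fin d => (1:K)) ≠ 0 := by
    intro h
    have := congrFun h ⟨0, hd⟩
    simp at this
  exact ⟨_, hN.unit_scale hx⟩

/-- ambient scaling -/
lemma norm_unit_scale {x : Fin d → K} (hx : x ≠ 0) :
    ‖(((‖x‖⁻¹ : ℝ) : K)) • x‖ = 1 := by
  rw [norm_smul, norm_coe_real, abs_of_nonneg (inv_nonneg.2 (norm_nonneg x))]
  exact inv_mul_cancel₀ (norm_ne_zero_iff.2 hx)

lemma IsNorm.exists_lower {N : (Fin d → K) → ℝ} (hN : IsNorm N) (hd : 1 ≤ d) :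
    ∃ c : ℝ, 0 < c ∧ ∀ x, c * ‖x‖ ≤ N x := by
  have : Nonempty (Fin d) := ⟨⟨0, hd⟩⟩
  have hsne : (Metric.sphere (0 : Fin d → K) 1).Nonempty := by
    refine ⟨fun _ => (1:K), ?_⟩
    simp [Metric.mem_sphere, dist_eq_norm]
  obtain ⟨x₀, hx₀s, hmin⟩ := (isCompact_sphere (0 : Fin d → K) 1).exists_isMinOn hsne
    hN.continuous.continuousOn
  have hx₀n : ‖x₀‖ = 1 := by simpa [dist_eq_norm] using hx₀s
  have hx₀ : x₀ ≠ 0 := by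
    intro h; rw [h] at hx₀n; simp at hx₀n
  refine ⟨N x₀, hN.pos hx₀, fun x => ?_⟩
  rcases eq_or_ne x 0 with rfl | hx
  · simp [hN.zero]
  · set u := (((‖x‖⁻¹ : ℝ) : K)) • x with hu
    have hus : u ∈ Metric.sphere (0 : Fin d → K) 1 := by
      rw [Metric.mem_sphere, dist_zero_right, hu]
      exact norm_unit_scale hx
    have h1 : N x₀ ≤ N u := hmin hus
    have h2 : N u = ‖x‖⁻¹ * N x := by
      rw [hu, hN.smul', norm_coe_real, abs_of_nonneg (inv_nonneg.2 (norm_nonneg x))]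
    have hxpos : (0:ℝ) < ‖x‖ := norm_pos_iff.2 hx
    rw [h2] at h1
    calc N x₀ * ‖x‖ ≤ (‖x‖⁻¹ * N x) * ‖x‖ := by nlinarith
      _ = N x := by field_simp

/-- entry bound of a matrix -/
noncomputable def eB (A : Matrix (Fin d) (Fin d) K) : ℝ := ∑ i, ∑ j, ‖A i j‖

lemma eB_nonneg (A : Matrix (Fin d) (Fin d) K) : 0 ≤ eB A :=
  Finset.sum_nonneg fun i _ => Finset.sum_nonneg fun j _ => norm_nonneg _

lemma eB_continuous : Continuous (eB (d := d) (K := K)) := by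
  refine continuous_finset_sum _ fun i _ => continuous_finset_sum _ fun j _ => ?_
  exact (continuous_apply_apply i j).norm

lemma mulVec_norm_le (A : Matrix (Fin d) (Fin d) K) (x : Fin d → K) :
    ‖A.mulVec x‖ ≤ eB A * ‖x‖ := by
  rw [pi_norm_le_iff_of_nonneg (mul_nonneg (eB_nonneg A) (norm_nonneg x))]
  intro i
  show ‖∑ j, A i j * x j‖ ≤ _
  calc ‖∑ j, A i j * x j‖ ≤ ∑ j, ‖A i j * x j‖ := norm_sum_le _ _
    _ = ∑ j, ‖A i j‖ * ‖x j‖ := by simp [norm_mul]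
    _ ≤ ∑ j, ‖A i j‖ * ‖x‖ := Finset.sum_le_sum fun j _ =>
        mul_le_mul_of_nonneg_left (norm_le_pi_norm x j) (norm_nonneg _)
    _ = (∑ j, ‖A i j‖) * ‖x‖ := by rw [Finset.sum_mul]
    _ ≤ eB A * ‖x‖ := by
        refine mul_le_mul_of_nonneg_right ?_ (norm_nonneg x)
        exact Finset.single_le_sum (fun i _ => Finset.sum_nonneg fun j _ => norm_nonneg _)
          (Finset.mem_univ i)

lemma continuous_mulVec_right (x : Fin d → K) :
    Continuous (fun A : Matrix (Fin d) (Fin d) K => A.mulVec x) :=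
  Continuous.matrix_mulVec continuous_id continuous_const

/-- `N (A x) ≤ K₁ N x` uniformly over `A ∈ 𝒜`. -/
def GoodBound (N : (Fin d → K) → ℝ) (𝒜 : Set (Matrix (Fin d) (Fin d) K)) (K₁ : ℝ) : Prop :=
  0 ≤ K₁ ∧ ∀ A ∈ 𝒜, ∀ x, N (A.mulVec x) ≤ K₁ * N x

lemma exists_goodBound {N : (Fin d → K) → ℝ} (hN : IsNorm N) (hd : 1 ≤ d)
    {𝒜 : Set (Matrix (Fin d) (Fin d) K)} (hcp : IsCompact 𝒜) :
    ∃ K₁, GoodBound N 𝒜 K₁ := by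
  obtain ⟨C2, hC2, hub⟩ := hN.exists_upper
  obtain ⟨C1, hC1, hlb⟩ := hN.exists_lower hd
  rcases 𝒜.eq_empty_or_nonempty with rfl | hne
  · exact ⟨0, le_refl 0, fun A hA => absurd hA (by simp)⟩
  have hbdd : BddAbove (eB '' 𝒜) := hcp.bddAbove_image eB_continuous.continuousOn
  obtain ⟨R, hR⟩ := hbdd
  have hR0 : 0 ≤ R := le_trans (eB_nonneg _) (hR ⟨hne.some, hne.some_mem, rfl⟩)
  refine ⟨C2 * R / C1, div_nonneg (mul_nonneg hC2.le hR0) hC1.le, fun A hA x => ?_⟩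
  have h1 : N (A.mulVec x) ≤ C2 * ‖A.mulVec x‖ := hub _
  have h2 : ‖A.mulVec x‖ ≤ eB A * ‖x‖ := mulVec_norm_le A x
  have h3 : eB A ≤ R := hR ⟨A, hA, rfl⟩
  have hnn : 0 ≤ ‖x‖ := norm_nonneg x
  have hNx : 0 ≤ N x := hN.nonneg x
  have hA0 := eB_nonneg A
  have key : N (A.mulVec x) ≤ C2 * R * ‖x‖ := by
    nlinarith [mul_le_mul_of_nonneg_left h2 hC2.le,
      mul_le_mul_of_nonneg_left (mul_le_mul_of_nonneg_right h3 hnn) hC2.le]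
  rw [div_mul_eq_mul_div, le_div_iff₀ hC1]
  nlinarith [mul_le_mul_of_nonneg_left (hlb x) (mul_nonneg hC2.le hR0),
    mul_le_mul_of_nonneg_right key hC1.le]

/- prodSet lemmas -/
variable {𝒜 : Set (Matrix (Fin d) (Fin d) K)}

lemma prodSet_nonempty (h : 𝒜.Nonempty) (n : ℕ) : (prodSet 𝒜 n).Nonempty := by
  induction n with
  | zero => exact ⟨1, rfl⟩
  | succ n ih =>
    obtain ⟨A, hA⟩ := h
    obtain ⟨P, hP⟩ := ih
    exact ⟨A * P, A, hA, P, hP, rfl⟩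

lemma prodSet_one : prodSet 𝒜 1 = 𝒜 := by
  ext M
  constructor
  · rintro ⟨A, hA, P, hP, rfl⟩
    have : P = 1 := hP
    rw [this, mul_one]; exact hA
  · intro hM
    exact ⟨M, hM, 1, rfl, (mul_one M).symm⟩

lemma prodSet_mul_mem {A B : Matrix (Fin d) (Fin d) K} {m n : ℕ}
    (hA : A ∈ prodSet 𝒜 m) (hB : B ∈ prodSet 𝒜 n) : A * B ∈ prodSet 𝒜 (m + n) := by
  induction m generalizing A with
  | zero =>
    have : A = 1 := hA
    rw [this, one_mul, Nat.zero_add]; exact hB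
  | succ m ih =>
    obtain ⟨A₀, hA₀, P, hP, rfl⟩ := hA
    rw [mul_assoc, Nat.add_right_comm m 1 n]
    exact ⟨A₀, hA₀, P * B, ih hP, rfl⟩

lemma prodSet_add {M : Matrix (Fin d) (Fin d) K} {m n : ℕ} (hM : M ∈ prodSet 𝒜 (m + n)) :
    ∃ P ∈ prodSet 𝒜 m, ∃ Q ∈ prodSet 𝒜 n, M = P * Q := by
  induction m generalizing M with
  | zero =>
    rw [Nat.zero_add] at hM
    exact ⟨1, rfl, M, hM, (one_mul M).symm⟩
  | succ m ih =>
    rw [Nat.add_right_comm m 1 n] at hM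
    obtain ⟨A, hA, P', hP', rfl⟩ := hM
    obtain ⟨P, hP, Q, hQ, rfl⟩ := ih hP'
    exact ⟨A * P, ⟨A, hA, P, hP, rfl⟩, Q, hQ, (mul_assoc A P Q).symm⟩

lemma prodSet_succ_right {n : ℕ} {M : Matrix (Fin d) (Fin d) K} :
    M ∈ prodSet 𝒜 (n + 1) ↔ ∃ P ∈ prodSet 𝒜 n, ∃ A ∈ 𝒜, M = P * A := by
  constructor
  · intro hM
    obtain ⟨P, hP, Q, hQ, rfl⟩ := prodSet_add (m := n) (n := 1) hM
    rw [prodSet_one] at hQ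
    exact ⟨P, hP, Q, hQ, rfl⟩
  · rintro ⟨P, hP, A, hA, rfl⟩
    have hA1 : A ∈ prodSet 𝒜 1 := by rw [prodSet_one]; exact hA
    exact prodSet_mul_mem hP hA1

lemma GoodBound.prod {N : (Fin d → K) → ℝ} {K₁ : ℝ} (hg : GoodBound N 𝒜 K₁) {n : ℕ}
    {M : Matrix (Fin d) (Fin d) K} (hM : M ∈ prodSet 𝒜 n) (x : Fin d → K) :
    N (M.mulVec x) ≤ K₁ ^ n * N x := by
  induction n generalizing M with
  | zero =>
    have : M = 1 := hM
    simp [this, Matrix.one_mulVec]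
  | succ n ih =>
    obtain ⟨A, hA, P, hP, rfl⟩ := hM
    have h1 : (A * P).mulVec x = A.mulVec (P.mulVec x) := (Matrix.mulVec_mulVec x A P).symm
    rw [h1]
    calc N (A.mulVec (P.mulVec x)) ≤ K₁ * N (P.mulVec x) := hg.2 A hA _
      _ ≤ K₁ * (K₁ ^ n * N x) := mul_le_mul_of_nonneg_left (ih hP) hg.1
      _ = K₁ ^ (n + 1) * N x := by ring

/-- multiplying a set of reals by a nonneg constant -/
lemma sSup_mul_left {r : ℝ} (hr : 0 ≤ r) {S : Set ℝ} (hS : S.Nonempty) (hbdd : BddAbove S) :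
    sSup ((fun s => r * s) '' S) = r * sSup S := by
  rcases eq_or_lt_of_le hr with rfl | hr'
  · simp only [zero_mul]
    rw [Set.Nonempty.image_const hS 0, csSup_singleton]
  · apply le_antisymm
    · refine csSup_le (hS.image _) ?_
      rintro _ ⟨s, hs, rfl⟩
      exact mul_le_mul_of_nonneg_left (le_csSup hbdd hs) hr
    · obtain ⟨u, hu⟩ := hbdd
      have hbdd' : BddAbove ((fun s => r * s) '' S) := by
        refine ⟨r * u, ?_⟩
        rintro _ ⟨s, hs, rfl⟩
        exact mul_le_mul_of_nonneg_left (hu hs) hr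
      rw [← le_div_iff₀' hr']
      refine csSup_le hS fun s hs => ?_
      rw [le_div_iff₀' hr']
      exact le_csSup hbdd' ⟨s, hs, rfl⟩

end AuxB
section AuxC

variable {d : ℕ} {K : Type*} [RCLike K] {N : (Fin d → K) → ℝ}
  {𝒜 : Set (Matrix (Fin d) (Fin d) K)} {K₁ : ℝ}

/-- `FF N 𝒜 n x = sup_{M ∈ 𝒜^n} N (M x)`. -/
noncomputable def FF (N : (Fin d → K) → ℝ) (𝒜 : Set (Matrix (Fin d) (Fin d) K)) (n : ℕ)
    (x : Fin d → K) : ℝ :=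
  sSup ((fun A : Matrix (Fin d) (Fin d) K => N (A.mulVec x)) '' prodSet 𝒜 n)

lemma FF_bddAbove (hg : GoodBound N 𝒜 K₁) (n : ℕ) (x : Fin d → K) :
    BddAbove ((fun A : Matrix (Fin d) (Fin d) K => N (A.mulVec x)) '' prodSet 𝒜 n) :=
  ⟨K₁ ^ n * N x, by rintro _ ⟨M, hM, rfl⟩; exact hg.prod hM x⟩

lemma le_FF (hg : GoodBound N 𝒜 K₁) {n : ℕ} {M : Matrix (Fin d) (Fin d) K}
    (hM : M ∈ prodSet 𝒜 n) (x : Fin d → K) : N (M.mulVec x) ≤ FF N 𝒜 n x :=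
  le_csSup (FF_bddAbove hg n x) ⟨M, hM, rfl⟩

lemma FF_le (hne : 𝒜.Nonempty) {n : ℕ} {x : Fin d → K} {b : ℝ}
    (h : ∀ M ∈ prodSet 𝒜 n, N (M.mulVec x) ≤ b) : FF N 𝒜 n x ≤ b :=
  csSup_le ((prodSet_nonempty hne n).image _) (by rintro _ ⟨M, hM, rfl⟩; exact h M hM)

lemma FF_nonneg (hN : IsNorm N) (hne : 𝒜.Nonempty) (hg : GoodBound N 𝒜 K₁) (n : ℕ)
    (x : Fin d → K) : 0 ≤ FF N 𝒜 n x :=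
  le_trans (hN.nonneg _) (le_FF hg (prodSet_nonempty hne n).some_mem x)

lemma FF_le_pow (hne : 𝒜.Nonempty) (hg : GoodBound N 𝒜 K₁) {n : ℕ} {x : Fin d → K} :
    FF N 𝒜 n x ≤ K₁ ^ n * N x :=
  FF_le hne fun M hM => hg.prod hM x

lemma FF_zero (x : Fin d → K) : FF N 𝒜 0 x = N x := by
  have h1 : prodSet 𝒜 0 = {1} := rfl
  rw [FF, h1, Set.image_singleton, Matrix.one_mulVec, csSup_singleton]

lemma FF_vec_zero (hN : IsNorm N) (hne : 𝒜.Nonempty) (n : ℕ) : FF N 𝒜 n 0 = 0 := by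
  have h1 : (fun A : Matrix (Fin d) (Fin d) K => N (A.mulVec 0)) '' prodSet 𝒜 n = {0} := by
    rw [show (fun A : Matrix (Fin d) (Fin d) K => N (A.mulVec 0)) = fun _ => 0 by
      funext A; rw [Matrix.mulVec_zero, hN.zero]]
    exact (prodSet_nonempty hne n).image_const 0
  rw [FF, h1, csSup_singleton]

lemma FF_smul (hN : IsNorm N) (hne : 𝒜.Nonempty) (hg : GoodBound N 𝒜 K₁) (n : ℕ) (c : K)
    (x : Fin d → K) : FF N 𝒜 n (c • x) = ‖c‖ * FF N 𝒜 n x := by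
  have himg : (fun A : Matrix (Fin d) (Fin d) K => N (A.mulVec (c • x))) '' prodSet 𝒜 n
      = (fun r => ‖c‖ * r) '' ((fun A : Matrix (Fin d) (Fin d) K => N (A.mulVec x)) '' prodSet 𝒜 n) := by
    rw [Set.image_image]
    exact Set.image_congr fun A _ => by rw [Matrix.mulVec_smul, hN.smul']
  rw [FF, himg, sSup_mul_left (norm_nonneg c) ((prodSet_nonempty hne n).image _) (FF_bddAbove hg n x)]
  rfl

lemma FF_add_le (hN : IsNorm N) (hne : 𝒜.Nonempty) (hg : GoodBound N 𝒜 K₁) (n : ℕ)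
    (x y : Fin d → K) : FF N 𝒜 n (x + y) ≤ FF N 𝒜 n x + FF N 𝒜 n y :=
  FF_le hne fun M hM => by
    rw [Matrix.mulVec_add]
    exact le_trans (hN.add_le _ _) (add_le_add (le_FF hg hM x) (le_FF hg hM y))

lemma FF_sum_le (hN : IsNorm N) (hne : 𝒜.Nonempty) (hg : GoodBound N 𝒜 K₁) (n : ℕ)
    {ι : Type*} (s : Finset ι) (f : ι → Fin d → K) :
    FF N 𝒜 n (∑ i ∈ s, f i) ≤ ∑ i ∈ s, FF N 𝒜 n (f i) := by
  classical
  induction s using Finset.induction_on with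
  | empty => simp [FF_vec_zero hN hne]
  | insert _ _ hx ih =>
    rename_i a s
    rw [Finset.sum_insert hx, Finset.sum_insert hx]
    exact le_trans (FF_add_le hN hne hg n _ _) (by linarith)

lemma FF_comp_le (hne : 𝒜.Nonempty) (hg : GoodBound N 𝒜 K₁) {n k : ℕ}
    {A : Matrix (Fin d) (Fin d) K} (hA : A ∈ prodSet 𝒜 k) (x : Fin d → K) :
    FF N 𝒜 n (A.mulVec x) ≤ FF N 𝒜 (n + k) x :=
  FF_le hne fun M hM => by
    rw [Matrix.mulVec_mulVec]
    exact le_FF hg (prodSet_mul_mem hM hA) x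

lemma FF_succ (hne : 𝒜.Nonempty) (hg : GoodBound N 𝒜 K₁) (n : ℕ) (x : Fin d → K) :
    FF N 𝒜 (n + 1) x = sSup ((fun A : Matrix (Fin d) (Fin d) K => FF N 𝒜 n (A.mulVec x)) '' 𝒜) := by
  apply le_antisymm
  · refine FF_le hne fun M hM => ?_
    obtain ⟨P, hP, A, hA, rfl⟩ := prodSet_succ_right.1 hM
    have h1 : (P * A).mulVec x = P.mulVec (A.mulVec x) := (Matrix.mulVec_mulVec x P A).symm
    rw [h1]
    refine le_trans (le_FF hg hP _) (le_csSup ?_ ⟨A, hA, rfl⟩)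
    refine ⟨K₁ ^ n * (K₁ * N x), ?_⟩
    rintro _ ⟨A', hA', rfl⟩
    exact le_trans (FF_le_pow hne hg)
      (mul_le_mul_of_nonneg_left (hg.2 A' hA' x) (pow_nonneg hg.1 n))
  · refine csSup_le (hne.image _) ?_
    rintro _ ⟨A, hA, rfl⟩
    refine FF_le hne fun P hP => ?_
    rw [Matrix.mulVec_mulVec]
    have hA1 : A ∈ prodSet 𝒜 1 := by rw [prodSet_one]; exact hA
    exact le_FF hg (prodSet_mul_mem hP hA1) x

/- opNorm lemmas -/

lemma opNorm_bddAbove {A : Matrix (Fin d) (Fin d) K} {b : ℝ}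
    (hb : ∀ x, N (A.mulVec x) ≤ b * N x) :
    BddAbove {r : ℝ | ∃ x : Fin d → K, N x = 1 ∧ r = N (A.mulVec x)} := by
  refine ⟨b, ?_⟩
  rintro r ⟨x, hx, rfl⟩
  simpa [hx] using hb x

lemma opNorm_le (hN : IsNorm N) (hd : 1 ≤ d) {A : Matrix (Fin d) (Fin d) K} {b : ℝ}
    (h : ∀ x, N x = 1 → N (A.mulVec x) ≤ b) : opNorm N A ≤ b := by
  refine csSup_le ?_ ?_
  · obtain ⟨x, hx⟩ := hN.exists_unit hd
    exact ⟨N (A.mulVec x), x, hx, rfl⟩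
  · rintro r ⟨x, hx, rfl⟩
    exact h x hx

lemma opNorm_nonneg (hN : IsNorm N) (hd : 1 ≤ d) {A : Matrix (Fin d) (Fin d) K} {b : ℝ}
    (hb : ∀ x, N (A.mulVec x) ≤ b * N x) : 0 ≤ opNorm N A := by
  obtain ⟨x, hx⟩ := hN.exists_unit hd
  exact le_trans (hN.nonneg _) (le_csSup (opNorm_bddAbove hb) ⟨x, hx, rfl⟩)

lemma le_opNorm (hN : IsNorm N) {A : Matrix (Fin d) (Fin d) K} {b : ℝ}
    (hb : ∀ x, N (A.mulVec x) ≤ b * N x) (x : Fin d → K) :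
    N (A.mulVec x) ≤ opNorm N A * N x := by
  rcases eq_or_ne x 0 with rfl | hx
  · simp [Matrix.mulVec_zero, hN.zero]
  · set u := (((N x)⁻¹ : ℝ) : K) • x with hu
    have hu1 : N u = 1 := hN.unit_scale hx
    have h1 : N (A.mulVec u) ≤ opNorm N A := le_csSup (opNorm_bddAbove hb) ⟨u, hu1, rfl⟩
    have hx' : (((N x : ℝ) : K)) • u = x := by
      rw [hu]; exact unit_scale_smul (N x) (ne_of_gt (hN.pos hx))
    calc N (A.mulVec x) = N (A.mulVec ((((N x : ℝ) : K)) • u)) := by rw [hx']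
      _ = ‖(((N x : ℝ) : K))‖ * N (A.mulVec u) := by rw [Matrix.mulVec_smul, hN.smul']
      _ = N x * N (A.mulVec u) := by rw [norm_coe_real, abs_of_nonneg (hN.nonneg x)]
      _ ≤ N x * opNorm N A := mul_le_mul_of_nonneg_left h1 (hN.nonneg x)
      _ = opNorm N A * N x := mul_comm _ _

/- setNorm lemmas -/

lemma setNorm_bddAbove (hN : IsNorm N) (hd : 1 ≤ d) (hg : GoodBound N 𝒜 K₁) (n : ℕ) :
    BddAbove (opNorm N '' prodSet 𝒜 n) := by
  refine ⟨K₁ ^ n, ?_⟩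
  rintro _ ⟨M, hM, rfl⟩
  exact opNorm_le hN hd fun x hx => by simpa [hx] using hg.prod hM x

lemma le_setNorm (hN : IsNorm N) (hd : 1 ≤ d) (hg : GoodBound N 𝒜 K₁) {n : ℕ}
    {M : Matrix (Fin d) (Fin d) K} (hM : M ∈ prodSet 𝒜 n) :
    opNorm N M ≤ setNorm N (prodSet 𝒜 n) :=
  le_csSup (setNorm_bddAbove hN hd hg n) ⟨M, hM, rfl⟩

lemma setNorm_le (hne : 𝒜.Nonempty) {n : ℕ} {b : ℝ}
    (h : ∀ M ∈ prodSet 𝒜 n, opNorm N M ≤ b) : setNorm N (prodSet 𝒜 n) ≤ b :=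
  csSup_le ((prodSet_nonempty hne n).image _) (by rintro _ ⟨M, hM, rfl⟩; exact h M hM)

lemma setNorm_nonneg (hN : IsNorm N) (hd : 1 ≤ d) (hne : 𝒜.Nonempty)
    (hg : GoodBound N 𝒜 K₁) (n : ℕ) : 0 ≤ setNorm N (prodSet 𝒜 n) := by
  obtain ⟨M, hM⟩ := prodSet_nonempty hne n
  exact le_trans (opNorm_nonneg hN hd fun x => hg.prod hM x) (le_setNorm hN hd hg hM)

lemma FF_le_setNorm (hN : IsNorm N) (hd : 1 ≤ d) (hne : 𝒜.Nonempty)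
    (hg : GoodBound N 𝒜 K₁) (n : ℕ) (x : Fin d → K) :
    FF N 𝒜 n x ≤ setNorm N (prodSet 𝒜 n) * N x :=
  FF_le hne fun M hM =>
    le_trans (le_opNorm hN (fun y => hg.prod hM y) x)
      (mul_le_mul_of_nonneg_right (le_setNorm hN hd hg hM) (hN.nonneg x))

lemma setNorm_le_of_FF (hN : IsNorm N) (hd : 1 ≤ d) (hne : 𝒜.Nonempty)
    (hg : GoodBound N 𝒜 K₁) {n : ℕ} {b : ℝ} (h : ∀ x, N x = 1 → FF N 𝒜 n x ≤ b) :
    setNorm N (prodSet 𝒜 n) ≤ b :=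
  setNorm_le hne fun M hM => opNorm_le hN hd fun x hx => le_trans (le_FF hg hM x) (h x hx)

lemma le_setNorm_of_FF (hN : IsNorm N) (hd : 1 ≤ d) (hne : 𝒜.Nonempty)
    (hg : GoodBound N 𝒜 K₁) {n : ℕ} {x : Fin d → K} (hx : N x = 1) :
    FF N 𝒜 n x ≤ setNorm N (prodSet 𝒜 n) := by
  have := FF_le_setNorm hN hd hne hg n x
  rwa [hx, mul_one] at this

lemma opNorm_one (hN : IsNorm N) (hd : 1 ≤ d) : opNorm N (1 : Matrix (Fin d) (Fin d) K) = 1 := by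
  have hset : {r : ℝ | ∃ x : Fin d → K, N x = 1 ∧ r = N ((1 : Matrix (Fin d) (Fin d) K).mulVec x)}
      = {1} := by
    ext r
    simp only [Matrix.one_mulVec, Set.mem_setOf_eq, Set.mem_singleton_iff]
    constructor
    · rintro ⟨x, hx, rfl⟩; exact hx
    · rintro rfl
      obtain ⟨x, hx⟩ := hN.exists_unit hd
      exact ⟨x, hx, hx.symm⟩
  rw [opNorm, hset, csSup_singleton]

lemma setNorm_zero_eq_one (hN : IsNorm N) (hd : 1 ≤ d) :
    setNorm N (prodSet 𝒜 0) = 1 := by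
  have h1 : prodSet 𝒜 0 = {1} := rfl
  rw [setNorm, h1, Set.image_singleton, opNorm_one hN hd, csSup_singleton]

lemma setNorm_submul (hN : IsNorm N) (hd : 1 ≤ d) (hne : 𝒜.Nonempty)
    (hg : GoodBound N 𝒜 K₁) (m n : ℕ) :
    setNorm N (prodSet 𝒜 (m + n)) ≤ setNorm N (prodSet 𝒜 m) * setNorm N (prodSet 𝒜 n) := by
  refine setNorm_le hne fun M hM => ?_
  obtain ⟨P, hP, Q, hQ, rfl⟩ := prodSet_add hM
  refine opNorm_le hN hd fun x hx => ?_
  have h1 : (P * Q).mulVec x = P.mulVec (Q.mulVec x) := (Matrix.mulVec_mulVec x P Q).symm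
  rw [h1]
  calc N (P.mulVec (Q.mulVec x)) ≤ opNorm N P * N (Q.mulVec x) :=
        le_opNorm hN (fun y => hg.prod hP y) _
    _ ≤ setNorm N (prodSet 𝒜 m) * N (Q.mulVec x) :=
        mul_le_mul_of_nonneg_right (le_setNorm hN hd hg hP) (hN.nonneg _)
    _ ≤ setNorm N (prodSet 𝒜 m) * (opNorm N Q * N x) :=
        mul_le_mul_of_nonneg_left (le_opNorm hN (fun y => hg.prod hQ y) x)
          (setNorm_nonneg hN hd hne hg m)
    _ ≤ setNorm N (prodSet 𝒜 m) * (setNorm N (prodSet 𝒜 n) * N x) := by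
        refine mul_le_mul_of_nonneg_left ?_ (setNorm_nonneg hN hd hne hg m)
        exact mul_le_mul_of_nonneg_right (le_setNorm hN hd hg hQ) (hN.nonneg x)
    _ = setNorm N (prodSet 𝒜 m) * setNorm N (prodSet 𝒜 n) := by rw [hx, mul_one]

end AuxC
section AuxD

variable {d : ℕ} {K : Type*} [RCLike K] {N : (Fin d → K) → ℝ}
  {𝒜 : Set (Matrix (Fin d) (Fin d) K)} {K₁ : ℝ}

/-- Fekete argument: the `jsr` is a positive limit, and `‖𝒜^n‖ ≥ ρ^n`. -/
lemma jsr_spec (hN : IsNorm N) (hd : 1 ≤ d) (hne : 𝒜.Nonempty) (hg : GoodBound N 𝒜 K₁)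
    {c : ℝ} (hc : 0 < c) (hlow : ∀ n, c ^ n ≤ setNorm N (prodSet 𝒜 n)) :
    0 < jsr N 𝒜 ∧ (∀ n, jsr N 𝒜 ^ n ≤ setNorm N (prodSet 𝒜 n)) ∧
      Tendsto (fun n : ℕ => setNorm N (prodSet 𝒜 n) ^ ((n : ℝ)⁻¹)) atTop (nhds (jsr N 𝒜)) := by
  set s := fun n => setNorm N (prodSet 𝒜 n) with hs
  have hspos : ∀ n, 0 < s n := fun n => lt_of_lt_of_le (pow_pos hc n) (hlow n)
  set u := fun n => Real.log (s n) with hu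
  have hsub : Subadditive u := by
    intro m n
    calc u (m + n) ≤ Real.log (s m * s n) :=
          Real.log_le_log (hspos _) (setNorm_submul hN hd hne hg m n)
      _ = u m + u n := Real.log_mul (ne_of_gt (hspos m)) (ne_of_gt (hspos n))
  have hbdd : BddBelow (Set.range fun n : ℕ => u n / n) := by
    refine ⟨min (Real.log c) 0, ?_⟩
    rintro _ ⟨n, rfl⟩
    rcases Nat.eq_zero_or_pos n with rfl | hn
    · simp
    · have hnpos : (0:ℝ) < (n:ℝ) := by exact_mod_cast hn
      have h1 : Real.log c ≤ u n / n := by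
        rw [le_div_iff₀ hnpos]
        calc Real.log c * n = Real.log (c ^ n) := by rw [Real.log_pow]; ring
          _ ≤ u n := Real.log_le_log (pow_pos hc n) (hlow n)
      exact le_trans (min_le_left _ _) h1
  have hlim := hsub.tendsto_lim hbdd
  set L := hsub.lim with hL
  have key : ∀ n : ℕ, 1 ≤ n → s n ^ ((n : ℝ)⁻¹) = Real.exp (u n / n) := by
    intro n _
    rw [Real.rpow_def_of_pos (hspos n), div_eq_mul_inv]
  have htend : Tendsto (fun n : ℕ => s n ^ ((n : ℝ)⁻¹)) atTop (nhds (Real.exp L)) := by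
    have h1 : Tendsto (fun n : ℕ => Real.exp (u n / n)) atTop (nhds (Real.exp L)) :=
      (Real.continuous_exp.tendsto L).comp hlim
    refine h1.congr' ?_
    filter_upwards [eventually_ge_atTop 1] with n hn
    exact (key n hn).symm
  have hjsr : jsr N 𝒜 = Real.exp L := by
    rw [jsr]; exact htend.limsup_eq
  refine ⟨by rw [hjsr]; exact Real.exp_pos L, fun n => ?_, by rw [hjsr]; exact htend⟩
  rcases Nat.eq_zero_or_pos n with rfl | hn
  · rw [pow_zero]
    exact le_of_eq (setNorm_zero_eq_one hN hd).symm
  · have hnpos : (0:ℝ) < (n:ℝ) := by exact_mod_cast hn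
    have hLle : L ≤ u n / n := by
      exact hsub.lim_le_div hbdd hn.ne'
    have h2 : (n : ℝ) * L ≤ u n := by
      rw [← le_div_iff₀' hnpos] at *
      linarith [hLle]
    calc jsr N 𝒜 ^ n = Real.exp ((n : ℝ) * L) := by rw [hjsr, Real.exp_nat_mul]
      _ ≤ Real.exp (u n) := Real.exp_le_exp.2 h2
      _ = s n := Real.exp_log (hspos n)

end AuxD
section AuxE

variable {d : ℕ} {K : Type*} [RCLike K] {N : (Fin d → K) → ℝ}
  {𝒜 : Set (Matrix (Fin d) (Fin d) K)} {K₁ : ℝ}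

lemma eq_zero_of_mulVec_eq_zero {A : Matrix (Fin d) (Fin d) K}
    (h : ∀ y, A.mulVec y = 0) : A = 0 := by
  ext i j
  have := congrFun (h (Pi.single j 1)) i
  rw [Matrix.mulVec_single] at this
  simpa using this

lemma FF_continuous (hN : IsNorm N) (hne : 𝒜.Nonempty) (hg : GoodBound N 𝒜 K₁) (n : ℕ) :
    Continuous (FF N 𝒜 n) := by
  obtain ⟨C, hC, hub⟩ := hN.exists_upper
  have hK0 : (0:ℝ) ≤ K₁ ^ n := pow_nonneg hg.1 n
  have hBpos : 0 < (K₁ ^ n + 1) * C := by nlinarith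
  rw [Metric.continuous_iff]
  intro x ε hε
  refine ⟨ε / ((K₁ ^ n + 1) * C), div_pos hε hBpos, fun y hy => ?_⟩
  have lip : ∀ u v : Fin d → K, FF N 𝒜 n u - FF N 𝒜 n v ≤ (K₁ ^ n + 1) * C * ‖u - v‖ := by
    intro u v
    have h1 : FF N 𝒜 n u ≤ FF N 𝒜 n v + FF N 𝒜 n (u - v) := by
      have := FF_add_le hN hne hg n v (u - v)
      simpa using this
    have h2 : FF N 𝒜 n (u - v) ≤ K₁ ^ n * N (u - v) := FF_le_pow hne hg
    have h3 : N (u - v) ≤ C * ‖u - v‖ := hub _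
    nlinarith [hN.nonneg (u - v), pow_nonneg hg.1 n, norm_nonneg (u - v)]
  rw [Real.dist_eq, abs_lt]
  rw [dist_eq_norm] at hy
  have h6 : ‖x - y‖ = ‖y - x‖ := by rw [← norm_neg]; ring_nf
  have hxy : (K₁ ^ n + 1) * C * ‖y - x‖ < ε := by
    have := mul_lt_mul_of_pos_left hy hBpos
    rwa [mul_div_cancel₀ _ (ne_of_gt hBpos)] at this
  constructor
  · have := lip x y
    rw [h6] at this
    linarith
  · have := lip y x
    linarith [this, hxy]

lemma exists_F1_lower (hN : IsNorm N) (hd : 1 ≤ d) (hne : 𝒜.Nonempty)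
    (hg : GoodBound N 𝒜 K₁) (hir : IsIrred 𝒜) (hA0 : ∃ A ∈ 𝒜, A ≠ 0) :
    ∃ c : ℝ, 0 < c ∧ ∀ x, c * N x ≤ FF N 𝒜 1 x := by
  obtain ⟨C2, hC2, hub⟩ := hN.exists_upper
  -- trivial common kernel
  have hker : ∀ x : Fin d → K, x ≠ 0 → ∃ A ∈ 𝒜, A.mulVec x ≠ 0 := by
    by_contra h
    push_neg at h
    obtain ⟨x, hx, hx0⟩ := h
    let W : Submodule K (Fin d → K) :=
      { carrier := {y | ∀ A ∈ 𝒜, A.mulVec y = 0}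
        add_mem' := fun hy hz A hA => by
          rw [Matrix.mulVec_add, hy A hA, hz A hA, add_zero]
        zero_mem' := fun A _ => Matrix.mulVec_zero A
        smul_mem' := fun c y hy A hA => by
          rw [Matrix.mulVec_smul, hy A hA, smul_zero] }
    have hinv : ∀ A ∈ 𝒜, ∀ z ∈ W, A.mulVec z ∈ W := by
      intro A hA z hz B hB
      rw [hz A hA, Matrix.mulVec_zero]
    rcases hir W hinv with hbot | htop
    · have hxW : x ∈ W := hx0
      rw [hbot, Submodule.mem_bot] at hxW
      exact hx hxW
    · obtain ⟨A, hA, hAne⟩ := hA0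
      apply hAne
      apply eq_zero_of_mulVec_eq_zero
      intro y
      have hyW : y ∈ W := by rw [htop]; exact Submodule.mem_top
      exact hyW A hA
  -- minimum of F1 over the unit sphere
  have : Nonempty (Fin d) := ⟨⟨0, hd⟩⟩
  have hsne : (Metric.sphere (0 : Fin d → K) 1).Nonempty := by
    refine ⟨fun _ => (1 : K), ?_⟩
    simp [Metric.mem_sphere, dist_eq_norm]
  obtain ⟨x₀, hx₀s, hmin⟩ := (isCompact_sphere (0 : Fin d → K) 1).exists_isMinOn hsne
    (FF_continuous hN hne hg 1).continuousOn
  have hx₀n : ‖x₀‖ = 1 := by simpa [dist_eq_norm] using hx₀s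
  have hx₀ : x₀ ≠ 0 := by intro h; rw [h] at hx₀n; simp at hx₀n
  have hm1 : 0 < FF N 𝒜 1 x₀ := by
    obtain ⟨A, hA, hAx⟩ := hker x₀ hx₀
    have hA1 : A ∈ prodSet 𝒜 1 := by rw [prodSet_one]; exact hA
    exact lt_of_lt_of_le (hN.pos hAx) (le_FF hg hA1 x₀)
  refine ⟨FF N 𝒜 1 x₀ / C2, by positivity, fun x => ?_⟩
  rcases eq_or_ne x 0 with rfl | hx
  · rw [hN.zero, mul_zero, FF_vec_zero hN hne]
  · set u := (((‖x‖⁻¹ : ℝ) : K)) • x with hu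
    have hus : u ∈ Metric.sphere (0 : Fin d → K) 1 := by
      rw [Metric.mem_sphere, dist_zero_right, hu]
      exact norm_unit_scale hx
    have h1 : FF N 𝒜 1 x₀ ≤ FF N 𝒜 1 u := hmin hus
    have h2 : FF N 𝒜 1 u = ‖x‖⁻¹ * FF N 𝒜 1 x := by
      rw [hu, FF_smul hN hne hg 1, norm_coe_real, abs_of_nonneg (inv_nonneg.2 (norm_nonneg x))]
    have hxpos : (0 : ℝ) < ‖x‖ := norm_pos_iff.2 hx
    have h3 : FF N 𝒜 1 x₀ * ‖x‖ ≤ FF N 𝒜 1 x := by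
      rw [h2] at h1
      have := mul_le_mul_of_nonneg_right h1 hxpos.le
      calc FF N 𝒜 1 x₀ * ‖x‖ ≤ ‖x‖⁻¹ * FF N 𝒜 1 x * ‖x‖ := this
        _ = FF N 𝒜 1 x := by field_simp
    have h4 : N x ≤ C2 * ‖x‖ := hub x
    rw [div_mul_eq_mul_div, div_le_iff₀ hC2]
    nlinarith [hm1]
  
lemma FF_pow_lower (hne : 𝒜.Nonempty) (hg : GoodBound N 𝒜 K₁) {c : ℝ} (hc : 0 < c)
    (h1 : ∀ x, c * N x ≤ FF N 𝒜 1 x) : ∀ n (x : Fin d → K), c ^ n * N x ≤ FF N 𝒜 n x := by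
  intro n
  induction n with
  | zero => intro x; rw [pow_zero, one_mul, FF_zero]
  | succ n ih =>
    intro x
    have key : c * FF N 𝒜 n x ≤ FF N 𝒜 (n + 1) x := by
      rw [← le_div_iff₀' hc]
      refine FF_le hne fun P hP => ?_
      rw [le_div_iff₀' hc]
      calc c * N (P.mulVec x) ≤ FF N 𝒜 1 (P.mulVec x) := h1 _
        _ ≤ FF N 𝒜 (1 + n) x := FF_comp_le hne hg hP x
        _ = FF N 𝒜 (n + 1) x := by rw [Nat.add_comm]
    calc c ^ (n + 1) * N x = c * (c ^ n * N x) := by ring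
      _ ≤ c * FF N 𝒜 n x := mul_le_mul_of_nonneg_left (ih x) hc.le
      _ ≤ FF N 𝒜 (n + 1) x := key

lemma setNorm_pow_lower (hN : IsNorm N) (hd : 1 ≤ d) (hne : 𝒜.Nonempty)
    (hg : GoodBound N 𝒜 K₁) {c : ℝ} (hc : 0 < c) (h1 : ∀ x, c * N x ≤ FF N 𝒜 1 x) :
    ∀ n, c ^ n ≤ setNorm N (prodSet 𝒜 n) := by
  intro n
  obtain ⟨x, hx⟩ := hN.exists_unit hd
  have h2 := FF_pow_lower hne hg hc h1 n x
  rw [hx, mul_one] at h2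
  exact le_trans h2 (le_setNorm_of_FF hN hd hne hg hx)

end AuxE
section AuxF

variable {d : ℕ} {K : Type*} [RCLike K] {N : (Fin d → K) → ℝ}
  {𝒜 : Set (Matrix (Fin d) (Fin d) K)} {K₁ : ℝ}

/-- the matrix with columns `(B l) x`. -/
noncomputable def Vmat (B : Fin d → Matrix (Fin d) (Fin d) K) (x : Fin d → K) :
    Matrix (Fin d) (Fin d) K :=
  Matrix.of fun i l => (B l).mulVec x i

lemma continuous_Vmat (B : Fin d → Matrix (Fin d) (Fin d) K) :
    Continuous fun x => Vmat B x := by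
  apply continuous_matrix
  intro i l
  exact (continuous_apply i).comp (Continuous.matrix_mulVec continuous_const continuous_id)

lemma mulVec_eq_sum_cols (A : Matrix (Fin d) (Fin d) K) (g : Fin d → K) :
    A.mulVec g = ∑ i, g i • (fun r => A r i) := by
  funext r
  rw [Finset.sum_apply]
  simp only [Matrix.mulVec, dotProduct, Pi.smul_apply, smul_eq_mul]
  exact Finset.sum_congr rfl fun i _ => mul_comm _ _

lemma continuous_finset_sup' {X : Type*} [TopologicalSpace X] {ι : Type*} {t : Finset ι}
    (ht : t.Nonempty) (f : ι → X → ℝ) (hf : ∀ i, Continuous (f i)) :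
    Continuous fun x => t.sup' ht fun i => f i x := by
  refine Finset.Nonempty.cons_induction
    (motive := fun s hs => Continuous fun x => s.sup' hs fun i => f i x) ?_ ?_ ht
  · intro a; simpa using hf a
  · intro a s h hs ih
    have heq : (fun x => (Finset.cons a s h).sup' (Finset.cons_nonempty h) fun i => f i x)
        = fun x => max (f a x) (s.sup' hs fun i => f i x) := by
      funext x; rw [Finset.sup'_cons hs]
    rw [heq]
    exact (hf a).max ih

/-- Pointwise basis from products, via irreducibility. -/
lemma exists_pointwise_basis (hir : IsIrred 𝒜) {x₀ : Fin d → K} (hx₀ : x₀ ≠ 0) :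
    ∃ (B : Fin d → Matrix (Fin d) (Fin d) K) (k : Fin d → ℕ),
      (∀ i, B i ∈ prodSet 𝒜 (k i)) ∧ (Vmat B x₀).det ≠ 0 := by
  classical
  set G : Set (Fin d → K) := (fun A : Matrix (Fin d) (Fin d) K => A.mulVec x₀) ''
    (⋃ n, prodSet 𝒜 n) with hG
  have hGmem : ∀ z ∈ G, ∃ n, ∃ P ∈ prodSet 𝒜 n, P.mulVec x₀ = z := by
    rintro z ⟨P, hP, rfl⟩
    obtain ⟨n, hn⟩ := Set.mem_iUnion.1 hP
    exact ⟨n, P, hn, rfl⟩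
  have hinvar : ∀ A ∈ 𝒜, ∀ z ∈ Submodule.span K G, A.mulVec z ∈ Submodule.span K G := by
    intro A hA z hz
    induction hz using Submodule.span_induction with
    | mem w hw =>
      obtain ⟨n, P, hP, rfl⟩ := hGmem w hw
      apply Submodule.subset_span
      rw [Matrix.mulVec_mulVec]
      exact ⟨A * P, Set.mem_iUnion.2 ⟨n + 1, ⟨A, hA, P, hP, rfl⟩⟩, rfl⟩
    | zero => rw [Matrix.mulVec_zero]; exact Submodule.zero_mem _
    | add u w _ _ hu hw => rw [Matrix.mulVec_add]; exact Submodule.add_mem _ hu hw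
    | smul c u _ hu => rw [Matrix.mulVec_smul]; exact Submodule.smul_mem _ c hu
  have hspan : Submodule.span K G = ⊤ := by
    rcases hir (Submodule.span K G) hinvar with hbot | htop
    · exfalso
      have hx₀G : x₀ ∈ G := by
        refine ⟨1, Set.mem_iUnion.2 ⟨0, rfl⟩, Matrix.one_mulVec x₀⟩
      have : x₀ ∈ Submodule.span K G := Submodule.subset_span hx₀G
      rw [hbot, Submodule.mem_bot] at this
      exact hx₀ this
    · exact htop
  obtain ⟨b, hbG, hbspan, hbli⟩ := exists_linearIndependent K G
  rw [hspan] at hbspan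
  have hbfin : b.Finite := hbli.setFinite
  have : Fintype b := hbfin.fintype
  have hbasis : Module.Basis b K (Fin d → K) := Module.Basis.mk hbli (by rw [Subtype.range_coe, hbspan])
  have hcard : Fintype.card b = d := by
    have h1 := Module.finrank_eq_card_basis hbasis
    rw [Module.finrank_fin_fun] at h1
    exact h1.symm
  set e : Fin d ≃ b := (Fintype.equivFinOfCardEq hcard).symm with he
  set v : Fin d → (Fin d → K) := fun i => ((e i : b) : Fin d → K) with hv
  have hvG : ∀ i, v i ∈ G := fun i => hbG (e i).2
  have hvli : LinearIndependent K v := hbli.comp e e.injective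
  -- choose products
  have hchoose : ∀ i, ∃ n, ∃ P ∈ prodSet 𝒜 n, P.mulVec x₀ = v i := fun i => hGmem _ (hvG i)
  choose k B hB hBv using hchoose
  refine ⟨B, k, hB, ?_⟩
  intro hdet
  obtain ⟨g, hg, hgz⟩ := Matrix.exists_mulVec_eq_zero_iff.2 hdet
  have hcols : (Vmat B x₀).mulVec g = ∑ i, g i • v i := by
    rw [mulVec_eq_sum_cols]
    exact Finset.sum_congr rfl fun i _ => by rw [← hBv i]; rfl
  rw [hcols] at hgz
  have := Fintype.linearIndependent_iff.1 hvli g hgz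
  exact hg (funext this)

end AuxF
section AuxG

variable {d : ℕ} {K : Type*} [RCLike K] {N : (Fin d → K) → ℝ}
  {𝒜 : Set (Matrix (Fin d) (Fin d) K)} {K₁ : ℝ}

/-- The key uniform spanning bound from irreducibility and compactness of the sphere. -/
lemma exists_span_bound (hN : IsNorm N) (hd : 1 ≤ d) (hir : IsIrred 𝒜) :
    ∃ (p : ℕ) (M : ℝ), 0 < M ∧ ∀ x : Fin d → K, ‖x‖ = 1 → ∀ y : Fin d → K,
      ∃ (g : Fin d → K) (B : Fin d → Matrix (Fin d) (Fin d) K),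
        (∀ i, ∃ k ≤ p, B i ∈ prodSet 𝒜 k) ∧ y = ∑ i, g i • (B i).mulVec x ∧
        ∀ i, ‖g i‖ ≤ M * N y := by
  classical
  obtain ⟨C1, hC1, hlb⟩ := hN.exists_lower hd
  have : Nonempty (Fin d) := ⟨⟨0, hd⟩⟩
  set S := Metric.sphere (0 : Fin d → K) 1 with hS
  have hnorm_of_mem : ∀ x ∈ S, ‖x‖ = 1 := fun x hx => by simpa [hS, dist_eq_norm] using hx
  have hne_of_mem : ∀ x ∈ S, x ≠ 0 := by
    intro x hx h0
    have := hnorm_of_mem x hx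
    rw [h0] at this; simp at this
  have hSne : S.Nonempty := by
    refine ⟨fun _ => (1 : K), ?_⟩
    simp [hS, Metric.mem_sphere, dist_eq_norm]
  have hScp : IsCompact S := isCompact_sphere 0 1
  -- choose pointwise data
  have hchoice : ∀ z : Fin d → K, ∃ (B : Fin d → Matrix (Fin d) (Fin d) K)
      (k : Fin d → ℕ), (∀ i, B i ∈ prodSet 𝒜 (k i)) ∧ (z ≠ 0 → (Vmat B z).det ≠ 0) := by
    intro z
    by_cases hz : z = 0
    · exact ⟨fun _ => 1, fun _ => 0, fun _ => rfl, fun h => absurd hz h⟩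
    · obtain ⟨B, k, h1, h2⟩ := exists_pointwise_basis hir hz
      exact ⟨B, k, h1, fun _ => h2⟩
  choose Bf kf hBf hdetf using hchoice
  -- open cover indexed by (nonzero) vectors
  set U : (Fin d → K) → Set (Fin d → K) := fun z => {x | (Vmat (Bf z) x).det ≠ 0} with hU
  have hUopen : ∀ z, IsOpen (U z) := by
    intro z
    have hcont : Continuous fun x => (Vmat (Bf z) x).det :=
      Continuous.matrix_det (continuous_Vmat (Bf z))
    have heq : U z = (fun x => (Vmat (Bf z) x).det) ⁻¹' {(0:K)}ᶜ := rfl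
    rw [heq]
    exact (isClosed_singleton.preimage hcont).isOpen_compl
  have hcover : S ⊆ ⋃ z : Fin d → K, U z := fun x hx =>
    Set.mem_iUnion.2 ⟨x, hdetf x (hne_of_mem x hx)⟩
  obtain ⟨t, ht⟩ := hScp.elim_finite_subcover U hUopen hcover
  have htne : t.Nonempty := by
    by_contra hemp
    rw [Finset.not_nonempty_iff_eq_empty] at hemp
    obtain ⟨x, hx⟩ := hSne
    have := ht hx
    rw [hemp] at this
    simpa using this
  -- δ : uniform lower bound for the best determinant over the sphere
  set hfun : (Fin d → K) → (Fin d → K) → ℝ := fun z x => ‖(Vmat (Bf z) x).det‖ with hhfun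
  have hhcont : ∀ z, Continuous (hfun z) :=
    fun z => (Continuous.matrix_det (continuous_Vmat (Bf z))).norm
  set Gmax : (Fin d → K) → ℝ := fun x => t.sup' htne fun z => hfun z x with hGmax
  have hGcont : Continuous Gmax := continuous_finset_sup' htne _ hhcont
  obtain ⟨x₁, hx₁S, hx₁min⟩ := hScp.exists_isMinOn hSne hGcont.continuousOn
  set δ := Gmax x₁ with hδ
  have hδpos : 0 < δ := by
    obtain ⟨z, hz⟩ := Set.mem_iUnion₂.1 (ht hx₁S)
    obtain ⟨hzt, hzU⟩ := hz
    have h1 : hfun z x₁ ≤ Gmax x₁ := Finset.le_sup' (fun z => hfun z x₁) hzt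
    have h2 : 0 < hfun z x₁ := norm_pos_iff.2 hzU
    exact lt_of_lt_of_le h2 h1
  have hδle : ∀ x ∈ S, δ ≤ Gmax x := fun x hx => hx₁min hx
  -- E : uniform upper bound for adjugate entries over the sphere
  set efun : (Fin d → K) → (Fin d → K) → ℝ :=
    fun z x => eB ((Vmat (Bf z) x).adjugate) with hefun
  have hecont : ∀ z, Continuous (efun z) :=
    fun z => eB_continuous.comp (Continuous.matrix_adjugate (continuous_Vmat (Bf z)))
  set Efun : (Fin d → K) → ℝ := fun z => sSup (efun z '' S) with hEfun
  have hEfun_b : ∀ z, ∀ x ∈ S, efun z x ≤ Efun z := by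
    intro z x hx
    exact le_csSup (hScp.bddAbove_image (hecont z).continuousOn) ⟨x, hx, rfl⟩
  set E := t.sup' htne Efun with hE
  have hEb : ∀ z ∈ t, ∀ x ∈ S, efun z x ≤ E := fun z hz x hx =>
    le_trans (hEfun_b z x hx) (Finset.le_sup' Efun hz)
  have hE0 : 0 ≤ E := by
    obtain ⟨z, hz⟩ := htne
    exact le_trans (eB_nonneg _) (hEb z hz x₁ hx₁S)
  -- the final data
  refine ⟨t.sup fun z => Finset.univ.sup (kf z), E / (δ * C1) + 1, by positivity, ?_⟩
  intro x hx y
  have hxS : x ∈ S := by simp [hS, Metric.mem_sphere, dist_eq_norm, hx]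
  obtain ⟨z, hzt, hzeq⟩ := t.exists_mem_eq_sup' htne fun z => hfun z x
  have hdet_ge : δ ≤ ‖(Vmat (Bf z) x).det‖ := le_trans (hδle x hxS) (le_of_eq hzeq)
  have hdetne : (Vmat (Bf z) x).det ≠ 0 := by
    intro h0
    rw [h0] at hdet_ge
    simp at hdet_ge
    linarith
  set V := Vmat (Bf z) x with hV
  set g : Fin d → K := (V.det)⁻¹ • (V.adjugate.mulVec y) with hg
  refine ⟨g, Bf z, ?_, ?_, ?_⟩
  · intro i
    refine ⟨kf z i, ?_, hBf z i⟩

    calc kf z i ≤ Finset.univ.sup (kf z) := Finset.le_sup (Finset.mem_univ i)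
      _ ≤ t.sup fun z => Finset.univ.sup (kf z) :=
          Finset.le_sup (f := fun z => Finset.univ.sup (kf z)) hzt
  · -- y = ∑ i, g i • (B i) x
    have hVg : V.mulVec g = y := by
      rw [hg, Matrix.mulVec_smul, Matrix.mulVec_mulVec, Matrix.mul_adjugate,
        Matrix.smul_mulVec, Matrix.one_mulVec, smul_smul,
        inv_mul_cancel₀ hdetne, one_smul]
    have hcols : V.mulVec g = ∑ i, g i • (fun r => V r i) := mulVec_eq_sum_cols V g
    rw [← hVg, hcols]
    exact Finset.sum_congr rfl fun i _ => rfl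
  · -- coefficient bound
    intro i
    have h1 : g i = (V.det)⁻¹ * (V.adjugate.mulVec y i) := rfl
    have h2 : ‖g i‖ = ‖V.det‖⁻¹ * ‖V.adjugate.mulVec y i‖ := by
      rw [h1, norm_mul, norm_inv]
    have h3 : ‖V.adjugate.mulVec y i‖ ≤ eB V.adjugate * ‖y‖ :=
      le_trans (norm_le_pi_norm _ i) (mulVec_norm_le _ y)
    have h4 : eB V.adjugate ≤ E := hEb z hzt x hxS
    have h5 : ‖y‖ ≤ N y / C1 := by
      rw [le_div_iff₀ hC1]
      linarith [hlb y, mul_comm C1 ‖y‖]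
    have h6 : ‖V.det‖⁻¹ ≤ δ⁻¹ := inv_anti₀ hδpos hdet_ge
    have hdet_pos : 0 < ‖V.det‖ := norm_pos_iff.2 hdetne
    have hNy : 0 ≤ N y := hN.nonneg y
    have hy0 : 0 ≤ ‖y‖ := norm_nonneg y
    calc ‖g i‖ = ‖V.det‖⁻¹ * ‖V.adjugate.mulVec y i‖ := h2
      _ ≤ δ⁻¹ * (E * (N y / C1)) := by
          have ha : ‖V.adjugate.mulVec y i‖ ≤ E * (N y / C1) := by
            calc ‖V.adjugate.mulVec y i‖ ≤ eB V.adjugate * ‖y‖ := h3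
              _ ≤ E * ‖y‖ := mul_le_mul_of_nonneg_right h4 hy0
              _ ≤ E * (N y / C1) := mul_le_mul_of_nonneg_left h5 hE0
          have hnn : 0 ≤ ‖V.adjugate.mulVec y i‖ := norm_nonneg _
          exact mul_le_mul h6 ha hnn (inv_nonneg.2 hδpos.le)
      _ = E / (δ * C1) * N y := by field_simp
      _ ≤ (E / (δ * C1) + 1) * N y := by nlinarith

end AuxG
section AuxH

variable {d : ℕ} {K : Type*} [RCLike K] {N : (Fin d → K) → ℝ}
  {𝒜 : Set (Matrix (Fin d) (Fin d) K)} {K₁ : ℝ}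

/-- `max_{k ≤ p} F_{n+k}(x)` -/
noncomputable def mxF (N : (Fin d → K) → ℝ) (𝒜 : Set (Matrix (Fin d) (Fin d) K))
    (p n : ℕ) (x : Fin d → K) : ℝ :=
  (Finset.range (p + 1)).sup' Finset.nonempty_range_add_one fun k => FF N 𝒜 (n + k) x

lemma le_mxF {k p : ℕ} (hk : k ≤ p) (n : ℕ) (x : Fin d → K) :
    FF N 𝒜 (n + k) x ≤ mxF N 𝒜 p n x := by
  rw [mxF]
  exact Finset.le_sup' (fun k => FF N 𝒜 (n + k) x) (Finset.mem_range.2 (Nat.lt_succ_of_le hk))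

lemma mxF_le {b : ℝ} {p n : ℕ} {x : Fin d → K} (h : ∀ k ≤ p, FF N 𝒜 (n + k) x ≤ b) :
    mxF N 𝒜 p n x ≤ b := by
  rw [mxF]
  exact Finset.sup'_le _ _ fun k hkmem => h k (Nat.lt_succ_iff.1 (Finset.mem_range.1 hkmem))

lemma span_key (hN : IsNorm N) (hd : 1 ≤ d) (hne : 𝒜.Nonempty) (hg : GoodBound N 𝒜 K₁)
    {p : ℕ} {M : ℝ} (hM : 0 < M)
    (hsb : ∀ x : Fin d → K, ‖x‖ = 1 → ∀ y : Fin d → K,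
      ∃ (g : Fin d → K) (B : Fin d → Matrix (Fin d) (Fin d) K),
        (∀ i, ∃ k ≤ p, B i ∈ prodSet 𝒜 k) ∧ y = ∑ i, g i • (B i).mulVec x ∧
        ∀ i, ‖g i‖ ≤ M * N y) :
    ∀ n, ∀ x : Fin d → K, ‖x‖ = 1 →
      setNorm N (prodSet 𝒜 n) ≤ (d * M) * mxF N 𝒜 p n x := by
  intro n x hx
  have hmx0 : 0 ≤ mxF N 𝒜 p n x :=
    le_trans (FF_nonneg hN hne hg (n + 0) x) (le_mxF (Nat.zero_le p) n x)
  refine setNorm_le_of_FF hN hd hne hg fun y hy => ?_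
  obtain ⟨g, B, hk, hrep, hb⟩ := hsb x hx y
  calc FF N 𝒜 n y = FF N 𝒜 n (∑ i, g i • (B i).mulVec x) := by rw [← hrep]
    _ ≤ ∑ i, FF N 𝒜 n (g i • (B i).mulVec x) := FF_sum_le hN hne hg n _ _
    _ = ∑ i, ‖g i‖ * FF N 𝒜 n ((B i).mulVec x) := by
        exact Finset.sum_congr rfl fun i _ => FF_smul hN hne hg n (g i) _
    _ ≤ ∑ _i : Fin d, M * mxF N 𝒜 p n x := by
        refine Finset.sum_le_sum fun i _ => ?_
        obtain ⟨k, hkp, hBk⟩ := hk i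
        have h1 : FF N 𝒜 n ((B i).mulVec x) ≤ mxF N 𝒜 p n x :=
          le_trans (FF_comp_le hne hg hBk x) (le_mxF hkp n x)
        have h2 : ‖g i‖ ≤ M := by
          have := hb i
          rwa [hy, mul_one] at this
        exact mul_le_mul h2 h1 (FF_nonneg hN hne hg n _) hM.le
    _ = (d * M) * mxF N 𝒜 p n x := by
        rw [Finset.sum_const, Finset.card_univ, Fintype.card_fin, nsmul_eq_mul]
        ring

/-- Master bounds for the Barabanov construction. -/
lemma main_bounds (hN : IsNorm N) (hd : 1 ≤ d) (hne : 𝒜.Nonempty) (hcp : IsCompact 𝒜)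
    (hir : IsIrred 𝒜) (hA0 : ∃ A ∈ 𝒜, A ≠ 0) :
    ∃ (K₁ C DM : ℝ) (p : ℕ), GoodBound N 𝒜 K₁ ∧ 0 < jsr N 𝒜 ∧ 1 ≤ C ∧ 0 < DM ∧
      (∀ n, jsr N 𝒜 ^ n ≤ setNorm N (prodSet 𝒜 n)) ∧
      (∀ n, setNorm N (prodSet 𝒜 n) ≤ C * jsr N 𝒜 ^ n) ∧
      (∀ n, ∀ x : Fin d → K, ‖x‖ = 1 →
        setNorm N (prodSet 𝒜 n) ≤ DM * mxF N 𝒜 p n x) := by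
  obtain ⟨K₁, hg⟩ := exists_goodBound hN hd hcp
  obtain ⟨c, hc, hF1⟩ := exists_F1_lower hN hd hne hg hir hA0
  have hlow := setNorm_pow_lower hN hd hne hg hc hF1
  obtain ⟨hρpos, hsn_ge, htend⟩ := jsr_spec hN hd hne hg hc hlow
  set ρ := jsr N 𝒜 with hρ
  set sn := fun n => setNorm N (prodSet 𝒜 n) with hsn
  have hsnpos : ∀ n, 0 < sn n := fun n => lt_of_lt_of_le (pow_pos hρpos n) (hsn_ge n)
  obtain ⟨p, M, hM, hsb⟩ := exists_span_bound hN hd hir (N := N)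
  have hdpos : (0:ℝ) < d := by exact_mod_cast hd
  set DM := (d : ℝ) * M with hDM
  have hDMpos : 0 < DM := mul_pos hdpos hM
  have hkey := span_key hN hd hne hg hM hsb
  -- Q = max of sn over k ≤ p
  set Q : ℝ := (Finset.range (p + 1)).sup' Finset.nonempty_range_add_one sn with hQ
  have hQ1 : 1 ≤ Q := by
    have h0 : sn 0 ≤ Q := Finset.le_sup' sn (Finset.mem_range.2 (Nat.succ_pos p))
    have h1 : sn 0 = 1 := setNorm_zero_eq_one hN hd
    calc (1:ℝ) = sn 0 := h1.symm
      _ ≤ Q := h0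
  have hQk : ∀ k ≤ p, sn k ≤ Q := fun k hk =>
    Finset.le_sup' sn (Finset.mem_range.2 (Nat.lt_succ_of_le hk))
  obtain ⟨C2, hC2, hub⟩ := hN.exists_upper
  set CC := C2 * DM * Q with hCC
  have hQpos : (0:ℝ) < Q := lt_of_lt_of_le one_pos hQ1
  have hCCpos : 0 < CC := mul_pos (mul_pos hC2 hDMpos) hQpos
  -- supermultiplicativity
  have hsuper : ∀ n m, sn n * sn m ≤ CC * sn (n + m) := by
    intro n m
    have hstep : ∀ z : Fin d → K, N z = 1 → ∀ P ∈ prodSet 𝒜 m,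
        sn n * N (P.mulVec z) ≤ CC * sn (n + m) := by
      intro z hz P hP
      rcases eq_or_ne (P.mulVec z) 0 with hPz | hPz
      · rw [hPz, hN.zero, mul_zero]
        exact mul_nonneg hCCpos.le (hsnpos (n + m)).le
      · set w := P.mulVec z with hw
        have hwpos : (0:ℝ) < ‖w‖ := norm_pos_iff.2 hPz
        set x := (((‖w‖⁻¹ : ℝ) : K)) • w with hxdef
        have hx1 : ‖x‖ = 1 := norm_unit_scale hPz
        have h1 : sn n ≤ DM * mxF N 𝒜 p n x := hkey n x hx1
        have h2 : mxF N 𝒜 p n x ≤ ‖w‖⁻¹ * (sn (n + m) * Q) := by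
          refine mxF_le fun k hk => ?_
          have e1 : FF N 𝒜 (n + k) x = ‖w‖⁻¹ * FF N 𝒜 (n + k) w := by
            rw [hxdef, FF_smul hN hne hg, norm_coe_real,
              abs_of_nonneg (inv_nonneg.2 (norm_nonneg w))]
          have e2 : FF N 𝒜 (n + k) w ≤ FF N 𝒜 (n + k + m) z := FF_comp_le hne hg hP z
          have e3 : FF N 𝒜 (n + k + m) z ≤ sn (n + k + m) := by
            have := FF_le_setNorm hN hd hne hg (n + k + m) z
            rwa [hz, mul_one] at this
          have e4 : sn (n + k + m) ≤ sn (n + m) * sn k := by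
            have : n + k + m = (n + m) + k := by omega
            rw [this]
            exact setNorm_submul hN hd hne hg (n + m) k
          have e5 : sn (n + m) * sn k ≤ sn (n + m) * Q :=
            mul_le_mul_of_nonneg_left (hQk k hk) (hsnpos (n + m)).le
          rw [e1]
          have : FF N 𝒜 (n + k) w ≤ sn (n + m) * Q := le_trans e2 (le_trans e3 (le_trans e4 e5))
          exact mul_le_mul_of_nonneg_left this (inv_nonneg.2 (norm_nonneg w))
        have h3 : sn n ≤ DM * (‖w‖⁻¹ * (sn (n + m) * Q)) :=
          le_trans h1 (mul_le_mul_of_nonneg_left h2 hDMpos.le)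
        have h4 : N w ≤ C2 * ‖w‖ := hub w
        have hNw : 0 ≤ N w := hN.nonneg w
        calc sn n * N w ≤ (DM * (‖w‖⁻¹ * (sn (n + m) * Q))) * (C2 * ‖w‖) := by
              refine mul_le_mul h3 h4 hNw ?_
              exact mul_nonneg hDMpos.le (mul_nonneg (inv_nonneg.2 (norm_nonneg w))
                (mul_nonneg (hsnpos (n + m)).le hQpos.le))
            _ = CC * sn (n + m) := by
              field_simp
              ring
    -- now take sups
    have hsnm : sn m ≤ (CC * sn (n + m)) / sn n := by
      refine setNorm_le_of_FF hN hd hne hg fun z hz => ?_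
      refine FF_le hne fun P hP => ?_
      rw [le_div_iff₀ (hsnpos n)]
      calc N (P.mulVec z) * sn n = sn n * N (P.mulVec z) := mul_comm _ _
        _ ≤ CC * sn (n + m) := hstep z hz P hP
    calc sn n * sn m ≤ sn n * ((CC * sn (n + m)) / sn n) :=
          mul_le_mul_of_nonneg_left hsnm (hsnpos n).le
      _ = CC * sn (n + m) := by
          field_simp [ne_of_gt (hsnpos n)]
  -- Fekete once more, for the upper bound
  have hulim : Tendsto (fun n : ℕ => Real.log (sn n) / n) atTop (nhds (Real.log ρ)) := by
    have hcont : ContinuousAt Real.log ρ := Real.continuousAt_log (ne_of_gt hρpos)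
    have h1 : Tendsto (fun n : ℕ => Real.log (sn n ^ ((n:ℝ)⁻¹))) atTop (nhds (Real.log ρ)) :=
      (hcont.tendsto).comp htend
    refine h1.congr' ?_
    filter_upwards [eventually_ge_atTop 1] with n hn
    rw [Real.log_rpow (hsnpos n), div_eq_mul_inv, mul_comm]
  set s := fun n => Real.log CC - Real.log (sn n) with hsdef
  have hssub : Subadditive s := by
    intro a b
    have h1 : Real.log (sn a * sn b) ≤ Real.log (CC * sn (a + b)) :=
      Real.log_le_log (mul_pos (hsnpos a) (hsnpos b)) (hsuper a b)
    rw [Real.log_mul (ne_of_gt (hsnpos a)) (ne_of_gt (hsnpos b)),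
      Real.log_mul (ne_of_gt hCCpos) (ne_of_gt (hsnpos (a + b)))] at h1
    simp only [hsdef]
    linarith
  have hsn1 : ∀ n, sn n ≤ sn 1 ^ n := by
    intro n
    induction n with
    | zero =>
      rw [pow_zero]
      exact le_of_eq (setNorm_zero_eq_one hN hd)
    | succ n ih =>
      calc sn (n + 1) = sn (1 + n) := by rw [Nat.add_comm]
        _ ≤ sn 1 * sn n := setNorm_submul hN hd hne hg 1 n
        _ ≤ sn 1 * sn 1 ^ n := mul_le_mul_of_nonneg_left ih (hsnpos 1).le
        _ = sn 1 ^ (n + 1) := by ring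
  have hsbdd : BddBelow (Set.range fun n : ℕ => s n / n) := by
    refine ⟨-(|Real.log CC| + |Real.log (sn 1)|), ?_⟩
    rintro _ ⟨n, rfl⟩
    rcases Nat.eq_zero_or_pos n with rfl | hn
    · simp only [Nat.cast_zero, div_zero]
      have h5 := abs_nonneg (Real.log CC)
      have h6 := abs_nonneg (Real.log (sn 1))
      linarith
    · have hnpos : (0:ℝ) < n := by exact_mod_cast hn
      have h1 : Real.log (sn n) ≤ n * Real.log (sn 1) := by
        calc Real.log (sn n) ≤ Real.log (sn 1 ^ n) := Real.log_le_log (hsnpos n) (hsn1 n)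
          _ = n * Real.log (sn 1) := by rw [Real.log_pow]
      rw [le_div_iff₀ hnpos]
      have h2 : -(|Real.log CC| + |Real.log (sn 1)|) * n ≤
          -|Real.log CC| + n * (-(|Real.log (sn 1)|)) := by
        have hn1 : (1:ℝ) ≤ n := by exact_mod_cast hn
        nlinarith [abs_nonneg (Real.log CC), abs_nonneg (Real.log (sn 1))]
      refine le_trans h2 ?_
      have h3 : -|Real.log CC| ≤ Real.log CC := neg_abs_le _
      have h4 : n * (-(|Real.log (sn 1)|)) ≤ -Real.log (sn n) := by
        have h5 : -(|Real.log (sn 1)|) ≤ -Real.log (sn 1) := by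
          simp only [neg_le_neg_iff]
          exact le_abs_self _
        calc n * (-(|Real.log (sn 1)|)) ≤ n * (-Real.log (sn 1)) :=
              mul_le_mul_of_nonneg_left h5 hnpos.le
          _ = -(n * Real.log (sn 1)) := by ring
          _ ≤ -Real.log (sn n) := by linarith [h1]
      simp only [hsdef]
      linarith
  have hslim := hssub.tendsto_lim hsbdd
  have hslim' : Tendsto (fun n : ℕ => s n / n) atTop (nhds (-Real.log ρ)) := by
    have h1 : Tendsto (fun n : ℕ => Real.log CC / n) atTop (nhds 0) :=
      tendsto_const_div_atTop_nhds_zero_nat _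
    have h2 : Tendsto (fun n : ℕ => Real.log CC / n - Real.log (sn n) / n) atTop
        (nhds (0 - Real.log ρ)) := h1.sub hulim
    rw [zero_sub] at h2
    refine h2.congr fun n => ?_
    simp only [hsdef]
    ring
  have hLs : hssub.lim = -Real.log ρ := tendsto_nhds_unique hslim hslim'
  -- conclude the uniform bound
  refine ⟨K₁, max CC 1, DM, p, hg, hρpos, le_max_right _ _, hDMpos, hsn_ge, ?_, hkey⟩
  intro n
  rcases Nat.eq_zero_or_pos n with rfl | hn
  · rw [pow_zero, mul_one]
    calc sn 0 = 1 := setNorm_zero_eq_one hN hd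
      _ ≤ max CC 1 := le_max_right _ _
  · have hnpos : (0:ℝ) < n := by exact_mod_cast hn
    have h1 : hssub.lim ≤ s n / n := by
      exact hssub.lim_le_div hsbdd hn.ne'
    rw [hLs] at h1
    have h2 : Real.log (sn n) ≤ Real.log CC + n * Real.log ρ := by
      rw [le_div_iff₀ hnpos] at h1
      simp only [hsdef] at h1
      nlinarith
    have h3 : sn n ≤ CC * ρ ^ n := by
      calc sn n = Real.exp (Real.log (sn n)) := (Real.exp_log (hsnpos n)).symm
        _ ≤ Real.exp (Real.log CC + n * Real.log ρ) := Real.exp_le_exp.2 h2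
        _ = CC * ρ ^ n := by
            rw [Real.exp_add, Real.exp_log hCCpos, Real.exp_nat_mul, Real.exp_log hρpos]
    calc sn n ≤ CC * ρ ^ n := h3
      _ ≤ max CC 1 * ρ ^ n :=
          mul_le_mul_of_nonneg_right (le_max_left _ _) (pow_nonneg hρpos.le n)

end AuxH
section LimsupHelpers

lemma isBdd_of_le {f : ℕ → ℝ} {b : ℝ} (h : ∀ n, f n ≤ b) :
    Filter.IsBoundedUnder (· ≤ ·) atTop f :=
  Filter.isBoundedUnder_of ⟨b, h⟩

lemma isCobdd_of_ge {f : ℕ → ℝ} (h : ∀ n, 0 ≤ f n) :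
    Filter.IsCoboundedUnder (· ≤ ·) atTop f :=
  (Filter.isBoundedUnder_of (r := (· ≥ ·)) ⟨0, h⟩).isCoboundedUnder_flip

lemma my_limsup_nonneg {f : ℕ → ℝ} {b : ℝ} (h0 : ∀ n, 0 ≤ f n) (hb : ∀ n, f n ≤ b) :
    0 ≤ limsup f atTop :=
  le_limsup_of_frequently_le (Filter.Frequently.of_forall h0) (isBdd_of_le hb)

lemma my_limsup_le {f : ℕ → ℝ} {a : ℝ} (h0 : ∀ n, 0 ≤ f n) (h : ∀ n, f n ≤ a) :
    limsup f atTop ≤ a :=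
  limsup_le_of_le (isCobdd_of_ge h0) (Filter.Eventually.of_forall h)

lemma my_limsup_mono {f g : ℕ → ℝ} {b : ℝ} (h0 : ∀ n, 0 ≤ f n) (hgb : ∀ n, g n ≤ b)
    (h : ∀ n, f n ≤ g n) : limsup f atTop ≤ limsup g atTop :=
  limsup_le_limsup (Filter.Eventually.of_forall h) (isCobdd_of_ge h0) (isBdd_of_le hgb)

lemma my_limsup_shift (f : ℕ → ℝ) : limsup (fun n => f (n + 1)) atTop = limsup f atTop := by
  have h1 : (fun n : ℕ => f (n + 1)) = f ∘ (fun n : ℕ => n + 1) := rfl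
  rw [h1, Filter.limsup, Filter.limsup, ← Filter.map_map, Filter.map_add_atTop_eq_nat 1]

lemma my_limsup_const_mul {f : ℕ → ℝ} {r b : ℝ} (hr : 0 ≤ r) (h0 : ∀ n, 0 ≤ f n)
    (hb : ∀ n, f n ≤ b) : limsup (fun n => r * f n) atTop = r * limsup f atTop := by
  rcases eq_or_lt_of_le hr with rfl | hr'
  · simp only [zero_mul]
    rw [limsup_const]
  · have hiso := (OrderIso.mulLeft₀ r hr').limsup_apply (u := f) (f := atTop)
      (isBdd_of_le hb) (isCobdd_of_ge h0)
      (isBdd_of_le (f := fun n => r * f n) (b := r * b)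
        (fun n => mul_le_mul_of_nonneg_left (hb n) hr))
      (isCobdd_of_ge (fun n => mul_nonneg hr (h0 n)))
    exact hiso.symm

lemma my_limsup_add_le {f g : ℕ → ℝ} {bf bg : ℝ} (hf0 : ∀ n, 0 ≤ f n) (hfb : ∀ n, f n ≤ bf)
    (hg0 : ∀ n, 0 ≤ g n) (hgb : ∀ n, g n ≤ bg) :
    limsup (fun n => f n + g n) atTop ≤ limsup f atTop + limsup g atTop := by
  refine le_of_forall_pos_le_add fun ε hε => ?_
  have h1 : ∀ᶠ n in atTop, f n < limsup f atTop + ε / 2 :=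
    Filter.eventually_lt_of_limsup_lt (by linarith) (isBdd_of_le hfb)
  have h2 : ∀ᶠ n in atTop, g n < limsup g atTop + ε / 2 :=
    Filter.eventually_lt_of_limsup_lt (by linarith) (isBdd_of_le hgb)
  refine limsup_le_of_le (isCobdd_of_ge fun n => add_nonneg (hf0 n) (hg0 n)) ?_
  filter_upwards [h1, h2] with n hn1 hn2
  linarith

end LimsupHelpers
section AuxJ

variable {d : ℕ} {K : Type*} [RCLike K] {N : (Fin d → K) → ℝ}
  {𝒜 : Set (Matrix (Fin d) (Fin d) K)}

lemma image_eq_setOf (Nb : (Fin d → K) → ℝ) (𝒜 : Set (Matrix (Fin d) (Fin d) K))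
    (x : Fin d → K) :
    {r : ℝ | ∃ A ∈ 𝒜, r = Nb (A.mulVec x)}
      = (fun A : Matrix (Fin d) (Fin d) K => Nb (A.mulVec x)) '' 𝒜 := by
  ext r
  constructor
  · rintro ⟨A, hA, rfl⟩; exact ⟨A, hA, rfl⟩
  · rintro ⟨A, hA, rfl⟩; exact ⟨A, hA, rfl⟩

lemma exists_barabanov (hN : IsNorm N) (hd : 1 ≤ d) (hne : 𝒜.Nonempty) (hcp : IsCompact 𝒜)
    (hir : IsIrred 𝒜) (hA0 : ∃ A ∈ 𝒜, A ≠ 0) :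
    ∃ Nb : (Fin d → K) → ℝ, IsNorm Nb ∧
      ∀ x : Fin d → K, jsr N 𝒜 * Nb x = sSup {r : ℝ | ∃ A ∈ 𝒜, r = Nb (A.mulVec x)} := by
  classical
  obtain ⟨K₁, C, DM, p, hg, hρpos, hC1, hDMpos, hsn_ge, hsn_le, hkey⟩ :=
    main_bounds hN hd hne hcp hir hA0
  obtain ⟨C2, hC2, hub⟩ := hN.exists_upper
  set ρ := jsr N 𝒜 with hρdef
  have hρinv : (0:ℝ) ≤ ρ⁻¹ := inv_nonneg.2 hρpos.le
  set G : ℕ → (Fin d → K) → ℝ := fun n x => ρ⁻¹ ^ n * FF N 𝒜 n x with hGdef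
  have hG0 : ∀ n x, 0 ≤ G n x := fun n x =>
    mul_nonneg (pow_nonneg hρinv n) (FF_nonneg hN hne hg n x)
  have hGC : ∀ n x, G n x ≤ C * N x := by
    intro n x
    have h1 : FF N 𝒜 n x ≤ setNorm N (prodSet 𝒜 n) * N x := FF_le_setNorm hN hd hne hg n x
    have h2 : setNorm N (prodSet 𝒜 n) ≤ C * ρ ^ n := hsn_le n
    have h3 : ρ⁻¹ ^ n * ρ ^ n = 1 := by
      rw [← mul_pow, inv_mul_cancel₀ (ne_of_gt hρpos), one_pow]
    calc G n x ≤ ρ⁻¹ ^ n * ((C * ρ ^ n) * N x) := by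
          refine mul_le_mul_of_nonneg_left ?_ (pow_nonneg hρinv n)
          exact le_trans h1 (mul_le_mul_of_nonneg_right h2 (hN.nonneg x))
      _ = (ρ⁻¹ ^ n * ρ ^ n) * (C * N x) := by ring
      _ = C * N x := by rw [h3, one_mul]
  set Nb : (Fin d → K) → ℝ := fun x => limsup (fun n => G n x) atTop with hNbdef
  have hNb_le : ∀ x, Nb x ≤ C * N x := fun x =>
    my_limsup_le (fun n => hG0 n x) (fun n => hGC n x)
  have hNb_nonneg : ∀ x, 0 ≤ Nb x := fun x =>
    my_limsup_nonneg (fun n => hG0 n x) (fun n => hGC n x)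
  have hNb_smul : ∀ (c : K) (x : Fin d → K), Nb (c • x) = ‖c‖ * Nb x := by
    intro c x
    have h1 : ∀ n, G n (c • x) = ‖c‖ * G n x := by
      intro n
      simp only [hGdef]
      rw [FF_smul hN hne hg n c x]
      ring
    calc Nb (c • x) = limsup (fun n => ‖c‖ * G n x) atTop := by
          rw [hNbdef]
          exact limsup_congr (Filter.Eventually.of_forall h1)
      _ = ‖c‖ * Nb x :=
          my_limsup_const_mul (norm_nonneg c) (fun n => hG0 n x) (fun n => hGC n x)
  have hNb_zero : Nb 0 = 0 := by
    have h1 : ∀ n, G n (0 : Fin d → K) = 0 := fun n => by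
      simp only [hGdef]
      rw [FF_vec_zero hN hne, mul_zero]
    rw [hNbdef]
    simp only
    rw [limsup_congr (Filter.Eventually.of_forall h1), limsup_const]
  set m₀ := (min 1 ρ⁻¹) ^ p / DM with hm₀
  have hminpos : (0:ℝ) < min 1 ρ⁻¹ := lt_min one_pos (inv_pos.2 hρpos)
  have hm₀pos : 0 < m₀ := div_pos (pow_pos hminpos p) hDMpos
  have hNb_unit_lower : ∀ x : Fin d → K, ‖x‖ = 1 → m₀ ≤ Nb x := by
    intro x hx
    refine le_limsup_of_frequently_le ?_ (isBdd_of_le (fun n => hGC n x))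
    rw [Filter.frequently_atTop]
    intro n₀
    have h1 : setNorm N (prodSet 𝒜 n₀) ≤ DM * mxF N 𝒜 p n₀ x := hkey n₀ x hx
    obtain ⟨k, hkmem, hkeq⟩ := (Finset.range (p + 1)).exists_mem_eq_sup'
      Finset.nonempty_range_add_one (fun k => FF N 𝒜 (n₀ + k) x)
    have hkp : k ≤ p := Nat.lt_succ_iff.1 (Finset.mem_range.1 hkmem)
    refine ⟨n₀ + k, Nat.le_add_right n₀ k, ?_⟩
    rw [mxF, hkeq] at h1
    have h2 : ρ ^ n₀ ≤ DM * FF N 𝒜 (n₀ + k) x := le_trans (hsn_ge n₀) h1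
    have h3 : ρ ^ n₀ / DM ≤ FF N 𝒜 (n₀ + k) x := by
      rw [div_le_iff₀ hDMpos]
      linarith [h2, mul_comm DM (FF N 𝒜 (n₀ + k) x)]
    have h4 : ρ⁻¹ ^ (n₀ + k) * (ρ ^ n₀ / DM) ≤ G (n₀ + k) x :=
      mul_le_mul_of_nonneg_left h3 (pow_nonneg hρinv _)
    refine le_trans ?_ h4
    have h5 : ρ⁻¹ ^ (n₀ + k) * (ρ ^ n₀ / DM) = ρ⁻¹ ^ k / DM := by
      rw [pow_add]
      have h6 : ρ⁻¹ ^ n₀ * ρ ^ n₀ = 1 := by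
        rw [← mul_pow, inv_mul_cancel₀ (ne_of_gt hρpos), one_pow]
      field_simp
      rw [one_div]; nlinarith [h6]
    rw [h5, hm₀]
    have h6 : (min 1 ρ⁻¹) ^ p ≤ ρ⁻¹ ^ k := by
      calc (min 1 ρ⁻¹) ^ p ≤ (min 1 ρ⁻¹) ^ k :=
            pow_le_pow_of_le_one hminpos.le (min_le_left _ _) hkp
        _ ≤ ρ⁻¹ ^ k := pow_le_pow_left₀ hminpos.le (min_le_right _ _) k
    have h7 := mul_le_mul_of_nonneg_right h6 (inv_nonneg.2 hDMpos.le)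
    simpa [div_eq_mul_inv] using h7
  have hNb_lower : ∀ x : Fin d → K, x ≠ 0 → (m₀ / C2) * N x ≤ Nb x := by
    intro x hx
    set u := (((‖x‖⁻¹ : ℝ) : K)) • x with hu
    have hu1 : ‖u‖ = 1 := norm_unit_scale hx
    have h1 : m₀ ≤ Nb u := hNb_unit_lower u hu1
    have h2 : x = (((‖x‖ : ℝ) : K)) • u := by
      rw [hu]
      exact (unit_scale_smul ‖x‖ (norm_ne_zero_iff.2 hx)).symm
    have h3 : Nb x = ‖x‖ * Nb u := by
      conv_lhs => rw [h2]
      rw [hNb_smul, norm_coe_real, abs_of_nonneg (norm_nonneg x)]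
    have h4 : N x ≤ C2 * ‖x‖ := hub x
    have hxpos : (0:ℝ) < ‖x‖ := norm_pos_iff.2 hx
    rw [h3, div_mul_eq_mul_div, div_le_iff₀ hC2]
    calc m₀ * N x ≤ m₀ * (C2 * ‖x‖) := mul_le_mul_of_nonneg_left h4 hm₀pos.le
      _ = ‖x‖ * m₀ * C2 := by ring
      _ ≤ ‖x‖ * Nb u * C2 := by
          refine mul_le_mul_of_nonneg_right ?_ hC2.le
          exact mul_le_mul_of_nonneg_left h1 hxpos.le
  have hNb_norm : IsNorm Nb := by
    refine ⟨hNb_nonneg, fun x => ?_, hNb_smul, fun x y => ?_⟩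
    · constructor
      · intro h
        by_contra hx
        have h1 := hNb_lower x hx
        rw [h] at h1
        have h2 := hN.pos hx
        have h3 : (0:ℝ) < m₀ / C2 := div_pos hm₀pos hC2
        nlinarith
      · rintro rfl; exact hNb_zero
    · have h1 : ∀ n, G n (x + y) ≤ G n x + G n y := by
        intro n
        simp only [hGdef]
        rw [← mul_add]
        exact mul_le_mul_of_nonneg_left (FF_add_le hN hne hg n x y)
          (pow_nonneg hρinv n)
      calc Nb (x + y) ≤ limsup (fun n => G n x + G n y) atTop :=
            my_limsup_mono (fun n => hG0 n (x + y))
              (fun n => add_le_add (hGC n x) (hGC n y)) h1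
        _ ≤ Nb x + Nb y := my_limsup_add_le (fun n => hG0 n x) (fun n => hGC n x)
            (fun n => hG0 n y) (fun n => hGC n y)
  refine ⟨Nb, hNb_norm, fun x => ?_⟩
  rw [image_eq_setOf Nb 𝒜 x]
  set SupA := sSup ((fun A : Matrix (Fin d) (Fin d) K => Nb (A.mulVec x)) '' 𝒜) with hSupA
  have hbddA : BddAbove ((fun A : Matrix (Fin d) (Fin d) K => Nb (A.mulVec x)) '' 𝒜) := by
    refine ⟨C * (K₁ * N x), ?_⟩
    rintro _ ⟨A, hA, rfl⟩
    calc Nb (A.mulVec x) ≤ C * N (A.mulVec x) := hNb_le _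
      _ ≤ C * (K₁ * N x) :=
          mul_le_mul_of_nonneg_left (hg.2 A hA x) (le_trans zero_le_one hC1)
  have hshift : ρ * Nb x = limsup (fun n => ρ * G (n + 1) x) atTop := by
    rw [hNbdef]
    simp only
    rw [← my_limsup_shift (fun n => G n x)]
    exact (my_limsup_const_mul hρpos.le (fun n => hG0 (n + 1) x)
      (fun n => hGC (n + 1) x)).symm
  have hGsucc : ∀ n, ρ * G (n + 1) x = ρ⁻¹ ^ n * FF N 𝒜 (n + 1) x := by
    intro n
    simp only [hGdef]
    rw [pow_succ]
    field_simp
  have hle1 : SupA ≤ ρ * Nb x := by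
    refine csSup_le (hne.image _) ?_
    rintro _ ⟨A, hA, rfl⟩
    have hAle : ∀ n, G n (A.mulVec x) ≤ ρ * G (n + 1) x := by
      intro n
      rw [hGsucc n]
      refine mul_le_mul_of_nonneg_left ?_ (pow_nonneg hρinv n)
      have hA1 : A ∈ prodSet 𝒜 1 := by rw [prodSet_one]; exact hA
      exact FF_comp_le hne hg hA1 x
    calc Nb (A.mulVec x) ≤ limsup (fun n => ρ * G (n + 1) x) atTop :=
          my_limsup_mono (fun n => hG0 n _)
            (fun n => mul_le_mul_of_nonneg_left (hGC (n + 1) x) hρpos.le) hAle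
      _ = ρ * Nb x := hshift.symm
  have hge1 : ρ * Nb x ≤ SupA := by
    refine le_of_forall_pos_le_add fun ε hε => ?_
    set δ := ε / (1 + C) with hδ
    have hCpos : (0:ℝ) < 1 + C := by linarith
    have hδpos : 0 < δ := div_pos hε hCpos
    set U : ↥𝒜 → Set (Matrix (Fin d) (Fin d) K) :=
      fun z => {B | N ((B - z.1).mulVec x) < δ} with hU
    have hUopen : ∀ z, IsOpen (U z) := by
      intro z
      have hcont : Continuous fun B : Matrix (Fin d) (Fin d) K => N ((B - z.1).mulVec x) :=
        hN.continuous.comp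
          (Continuous.matrix_mulVec (continuous_id.sub continuous_const) continuous_const)
      exact isOpen_lt hcont continuous_const
    have hcover : 𝒜 ⊆ ⋃ z : ↥𝒜, U z := by
      intro A hA
      refine Set.mem_iUnion.2 ⟨⟨A, hA⟩, ?_⟩
      show N ((A - A).mulVec x) < δ
      rw [sub_self, Matrix.zero_mulVec, hN.zero]
      exact hδpos
    obtain ⟨t, ht⟩ := hcp.elim_finite_subcover U hUopen hcover
    have htne : t.Nonempty := by
      by_contra hemp
      rw [Finset.not_nonempty_iff_eq_empty] at hemp
      obtain ⟨A, hA⟩ := hne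
      have := ht hA
      rw [hemp] at this
      simpa using this
    have hzSup : ∀ z ∈ t, Nb ((z : ↥𝒜).1.mulVec x) ≤ SupA := fun z _ =>
      le_csSup hbddA ⟨z.1, z.2, rfl⟩
    have hev : ∀ᶠ n in atTop, ∀ z ∈ t, G n (z.1.mulVec x) < SupA + δ := by
      rw [eventually_all_finset]
      intro z hz
      refine Filter.eventually_lt_of_limsup_lt ?_ (isBdd_of_le (fun n => hGC n _))
      exact lt_of_le_of_lt (hzSup z hz) (by linarith)
    have hpoint : ∀ n, ρ * G (n + 1) x ≤
        (t.sup' htne fun z => G n (z.1.mulVec x)) + C * δ := by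
      intro n
      rw [hGsucc n]
      have hFF : FF N 𝒜 (n + 1) x ≤
          (t.sup' htne fun z => FF N 𝒜 n (z.1.mulVec x)) + setNorm N (prodSet 𝒜 n) * δ := by
        rw [FF_succ hne hg n x]
        refine csSup_le (hne.image _) ?_
        rintro _ ⟨A, hA, rfl⟩
        obtain ⟨z, hzt, hzU⟩ := Set.mem_iUnion₂.1 (ht hA)
        have h1 : FF N 𝒜 n (A.mulVec x) ≤ FF N 𝒜 n (z.1.mulVec x)
            + FF N 𝒜 n (A.mulVec x - z.1.mulVec x) := by
          have h0 := FF_add_le hN hne hg n (z.1.mulVec x) (A.mulVec x - z.1.mulVec x)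
          simpa using h0
        have h3 : N (A.mulVec x - z.1.mulVec x) ≤ δ := by
          have h4 : N ((A - z.1).mulVec x) < δ := hzU
          rw [Matrix.sub_mulVec] at h4
          exact h4.le
        have h2 : FF N 𝒜 n (A.mulVec x - z.1.mulVec x) ≤ setNorm N (prodSet 𝒜 n) * δ := by
          calc FF N 𝒜 n (A.mulVec x - z.1.mulVec x)
              ≤ setNorm N (prodSet 𝒜 n) * N (A.mulVec x - z.1.mulVec x) :=
                FF_le_setNorm hN hd hne hg n _
            _ ≤ setNorm N (prodSet 𝒜 n) * δ :=
                mul_le_mul_of_nonneg_left h3 (setNorm_nonneg hN hd hne hg n)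
        have h4 : FF N 𝒜 n (z.1.mulVec x) ≤ t.sup' htne fun z => FF N 𝒜 n (z.1.mulVec x) :=
          Finset.le_sup' (fun z : ↥𝒜 => FF N 𝒜 n (z.1.mulVec x)) hzt
        linarith
      have h5 := mul_le_mul_of_nonneg_left hFF (pow_nonneg hρinv n)
      rw [mul_add] at h5
      have h6 : ρ⁻¹ ^ n * (t.sup' htne fun z => FF N 𝒜 n (z.1.mulVec x))
          = t.sup' htne fun z => G n (z.1.mulVec x) := by
        exact Finset.comp_sup'_eq_sup'_comp htne (fun r => ρ⁻¹ ^ n * r)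
          (fun a b => mul_max_of_nonneg a b (pow_nonneg hρinv n))
      have h8 : ρ⁻¹ ^ n * setNorm N (prodSet 𝒜 n) ≤ C := by
        calc ρ⁻¹ ^ n * setNorm N (prodSet 𝒜 n) ≤ ρ⁻¹ ^ n * (C * ρ ^ n) :=
              mul_le_mul_of_nonneg_left (hsn_le n) (pow_nonneg hρinv n)
          _ = (ρ⁻¹ ^ n * ρ ^ n) * C := by ring
          _ = C := by
              rw [← mul_pow, inv_mul_cancel₀ (ne_of_gt hρpos), one_pow, one_mul]
      have h7 : ρ⁻¹ ^ n * (setNorm N (prodSet 𝒜 n) * δ) ≤ C * δ := by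
        calc ρ⁻¹ ^ n * (setNorm N (prodSet 𝒜 n) * δ)
            = (ρ⁻¹ ^ n * setNorm N (prodSet 𝒜 n)) * δ := by ring
          _ ≤ C * δ := mul_le_mul_of_nonneg_right h8 hδpos.le
      rw [h6] at h5
      linarith
    have hfinal : ∀ᶠ n in atTop, ρ * G (n + 1) x ≤ SupA + δ + C * δ := by
      filter_upwards [hev] with n hn
      have h1 : (t.sup' htne fun z => G n (z.1.mulVec x)) ≤ SupA + δ :=
        Finset.sup'_le _ _ fun z hz => (hn z hz).le
      linarith [hpoint n]
    have h2 : limsup (fun n => ρ * G (n + 1) x) atTop ≤ SupA + δ + C * δ :=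
      limsup_le_of_le (isCobdd_of_ge fun n => mul_nonneg hρpos.le (hG0 _ _)) hfinal
    have hδeq : δ + C * δ = ε := by
      rw [hδ]
      field_simp
    rw [hshift]
    linarith
  exact le_antisymm hge1 hle1

end AuxJ
section AuxK

variable {d : ℕ} {K : Type*} [RCLike K] {N : (Fin d → K) → ℝ}
  {𝒜 : Set (Matrix (Fin d) (Fin d) K)}

lemma FF_of_barabanov {Nb : (Fin d → K) → ℝ} (hNb : IsNorm Nb) (hne : 𝒜.Nonempty)
    {K₁' : ℝ} (hgb : GoodBound Nb 𝒜 K₁') {ρ : ℝ} (hρ0 : 0 ≤ ρ)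
    (hEq : ∀ x, ρ * Nb x = sSup {r : ℝ | ∃ A ∈ 𝒜, r = Nb (A.mulVec x)}) :
    ∀ n (x : Fin d → K), FF Nb 𝒜 n x = ρ ^ n * Nb x := by
  intro n
  induction n with
  | zero => intro x; rw [FF_zero, pow_zero, one_mul]
  | succ n ih =>
    intro x
    rw [FF_succ hne hgb n x]
    have himg : (fun A : Matrix (Fin d) (Fin d) K => FF Nb 𝒜 n (A.mulVec x)) '' 𝒜
        = (fun r => ρ ^ n * r) '' ((fun A : Matrix (Fin d) (Fin d) K => Nb (A.mulVec x)) '' 𝒜) := by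
      rw [Set.image_image]
      exact Set.image_congr fun A _ => ih _
    have hbdd : BddAbove ((fun A : Matrix (Fin d) (Fin d) K => Nb (A.mulVec x)) '' 𝒜) := by
      refine ⟨K₁' * Nb x, ?_⟩
      rintro _ ⟨A, hA, rfl⟩
      exact hgb.2 A hA x
    rw [himg, sSup_mul_left (pow_nonneg hρ0 n) (hne.image _) hbdd,
      ← image_eq_setOf, ← hEq x]
    ring

lemma setNorm_of_barabanov {Nb : (Fin d → K) → ℝ} (hNb : IsNorm Nb) (hd : 1 ≤ d)
    (hne : 𝒜.Nonempty) {K₁' : ℝ} (hgb : GoodBound Nb 𝒜 K₁') {ρ : ℝ} (hρ0 : 0 ≤ ρ)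
    (hEq : ∀ x, ρ * Nb x = sSup {r : ℝ | ∃ A ∈ 𝒜, r = Nb (A.mulVec x)}) :
    ∀ n, setNorm Nb (prodSet 𝒜 n) = ρ ^ n := by
  intro n
  apply le_antisymm
  · refine setNorm_le_of_FF hNb hd hne hgb fun x hx => ?_
    rw [FF_of_barabanov hNb hne hgb hρ0 hEq n x, hx, mul_one]
  · obtain ⟨x, hx⟩ := hNb.exists_unit hd
    have h1 := le_setNorm_of_FF hNb hd hne hgb (n := n) hx
    rwa [FF_of_barabanov hNb hne hgb hρ0 hEq n x, hx, mul_one] at h1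

lemma setNorm_le_comparison {Nb : (Fin d → K) → ℝ} (hN : IsNorm N) (hNb : IsNorm Nb)
    (hd : 1 ≤ d) (hne : 𝒜.Nonempty) {K₁ K₁' : ℝ} (hg : GoodBound N 𝒜 K₁)
    (hgb : GoodBound Nb 𝒜 K₁') {a : ℝ} (ha : 0 ≤ a)
    (hNle : ∀ z, N z ≤ a * Nb z) (hNble : ∀ z, Nb z ≤ a * N z) :
    ∀ n, setNorm N (prodSet 𝒜 n) ≤ (a * a) * setNorm Nb (prodSet 𝒜 n) := by
  intro n
  refine setNorm_le_of_FF hN hd hne hg fun x hx => ?_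
  refine FF_le hne fun M hM => ?_
  have hsb0 : 0 ≤ setNorm Nb (prodSet 𝒜 n) := setNorm_nonneg hNb hd hne hgb n
  calc N (M.mulVec x) ≤ a * Nb (M.mulVec x) := hNle _
    _ ≤ a * FF Nb 𝒜 n x := mul_le_mul_of_nonneg_left (le_FF hgb hM x) ha
    _ ≤ a * (setNorm Nb (prodSet 𝒜 n) * Nb x) :=
        mul_le_mul_of_nonneg_left (FF_le_setNorm hNb hd hne hgb n x) ha
    _ ≤ a * (setNorm Nb (prodSet 𝒜 n) * (a * N x)) := by
        refine mul_le_mul_of_nonneg_left ?_ ha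
        exact mul_le_mul_of_nonneg_left (hNble x) hsb0
    _ = (a * a) * setNorm Nb (prodSet 𝒜 n) * N x := by ring
    _ = (a * a) * setNorm Nb (prodSet 𝒜 n) := by rw [hx, mul_one]

lemma norm_equiv {Nb : (Fin d → K) → ℝ} (hN : IsNorm N) (hNb : IsNorm Nb) (hd : 1 ≤ d) :
    ∃ a : ℝ, 0 < a ∧ (∀ z, N z ≤ a * Nb z) ∧ (∀ z, Nb z ≤ a * N z) := by
  obtain ⟨CN, hCN, hubN⟩ := hN.exists_upper
  obtain ⟨cN, hcN, hlbN⟩ := hN.exists_lower hd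
  obtain ⟨Cb, hCb, hubB⟩ := hNb.exists_upper
  obtain ⟨cb, hcb, hlbB⟩ := hNb.exists_lower hd
  refine ⟨CN / cb + Cb / cN, by positivity, fun z => ?_, fun z => ?_⟩
  · have h1 : N z ≤ CN * ‖z‖ := hubN z
    have h2 : cb * ‖z‖ ≤ Nb z := hlbB z
    have h3 : 0 ≤ ‖z‖ := norm_nonneg z
    have h4 : 0 ≤ Nb z := hNb.nonneg z
    have h5 : CN / cb * (cb * ‖z‖) ≤ CN / cb * Nb z :=
      mul_le_mul_of_nonneg_left h2 (by positivity)
    have h6 : CN / cb * (cb * ‖z‖) = CN * ‖z‖ := by field_simp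
    nlinarith [mul_nonneg (div_nonneg hCb.le hcN.le) h4]
  · have h1 : Nb z ≤ Cb * ‖z‖ := hubB z
    have h2 : cN * ‖z‖ ≤ N z := hlbN z
    have h3 : 0 ≤ ‖z‖ := norm_nonneg z
    have h4 : 0 ≤ N z := hN.nonneg z
    have h5 : Cb / cN * (cN * ‖z‖) ≤ Cb / cN * N z :=
      mul_le_mul_of_nonneg_left h2 (by positivity)
    have h6 : Cb / cN * (cN * ‖z‖) = Cb * ‖z‖ := by field_simp
    nlinarith [mul_nonneg (div_nonneg hCN.le hcb.le) h4]

lemma backward_core (hN : IsNorm N) (hd : 1 ≤ d) (hne : 𝒜.Nonempty) (hcp : IsCompact 𝒜)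
    {Nb : (Fin d → K) → ℝ} (hNb : IsNorm Nb) {ρ : ℝ} (hρ0 : 0 ≤ ρ)
    (hEq : ∀ x, ρ * Nb x = sSup {r : ℝ | ∃ A ∈ 𝒜, r = Nb (A.mulVec x)}) :
    jsr N 𝒜 = ρ := by
  obtain ⟨K₁, hg⟩ := exists_goodBound hN hd hcp
  obtain ⟨K₁', hgb⟩ := exists_goodBound hNb hd hcp
  have hsnb : ∀ n, setNorm Nb (prodSet 𝒜 n) = ρ ^ n :=
    setNorm_of_barabanov hNb hd hne hgb hρ0 hEq
  obtain ⟨a, hapos, hNle, hNble⟩ := norm_equiv hN hNb hd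
  have hup : ∀ n, setNorm N (prodSet 𝒜 n) ≤ (a * a) * ρ ^ n := by
    intro n
    have h1 := setNorm_le_comparison hN hNb hd hne hg hgb hapos.le hNle hNble n
    rwa [hsnb n] at h1
  have hlo : ∀ n, ρ ^ n ≤ (a * a) * setNorm N (prodSet 𝒜 n) := by
    intro n
    have h1 := setNorm_le_comparison hNb hN hd hne hgb hg hapos.le hNble hNle n
    rwa [hsnb n] at h1
  have hsnN0 : ∀ n, 0 ≤ setNorm N (prodSet 𝒜 n) := setNorm_nonneg hN hd hne hg
  have haa : (0:ℝ) < a * a := mul_pos hapos hapos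
  rcases eq_or_lt_of_le hρ0 with rfl | hρpos
  · have hzero : ∀ n, 1 ≤ n → setNorm N (prodSet 𝒜 n) = 0 := by
      intro n hn
      have h1 := hup n
      rw [zero_pow (by omega), mul_zero] at h1
      exact le_antisymm h1 (hsnN0 n)
    rw [jsr]
    have hev : ∀ᶠ n : ℕ in atTop,
        setNorm N (prodSet 𝒜 n) ^ ((n : ℝ)⁻¹) = (0:ℝ) := by
      filter_upwards [eventually_ge_atTop 1] with n hn
      rw [hzero n hn]
      exact Real.zero_rpow (inv_ne_zero (Nat.cast_ne_zero.2 (by omega)))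
    rw [limsup_congr hev, limsup_const]
  · have hsnpos : ∀ n, 0 < setNorm N (prodSet 𝒜 n) := by
      intro n
      have h1 := hlo n
      have h2 : (0:ℝ) < ρ ^ n := pow_pos hρpos n
      nlinarith [hsnN0 n]
    have hlow_seq : Tendsto (fun n : ℕ => Real.log ρ - Real.log (a * a) / n) atTop
        (nhds (Real.log ρ)) := by
      have h1 := tendsto_const_div_atTop_nhds_zero_nat (Real.log (a * a))
      have h2 := (tendsto_const_nhds (x := Real.log ρ) (f := atTop (α := ℕ))).sub h1
      simpa using h2
    have hup_seq : Tendsto (fun n : ℕ => Real.log ρ + Real.log (a * a) / n) atTop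
        (nhds (Real.log ρ)) := by
      have h1 := tendsto_const_div_atTop_nhds_zero_nat (Real.log (a * a))
      have h2 := (tendsto_const_nhds (x := Real.log ρ) (f := atTop (α := ℕ))).add h1
      simpa using h2
    have htendlog : Tendsto (fun n : ℕ => Real.log (setNorm N (prodSet 𝒜 n)) / n) atTop
        (nhds (Real.log ρ)) := by
      refine tendsto_of_tendsto_of_tendsto_of_le_of_le' hlow_seq hup_seq ?_ ?_
      · filter_upwards [eventually_ge_atTop 1] with n hn
        have hnpos : (0:ℝ) < n := by exact_mod_cast hn
        have h1 : Real.log (ρ ^ n) ≤ Real.log ((a * a) * setNorm N (prodSet 𝒜 n)) :=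
          Real.log_le_log (pow_pos hρpos n) (hlo n)
        rw [Real.log_pow, Real.log_mul (ne_of_gt haa) (ne_of_gt (hsnpos n))] at h1
        rw [sub_le_iff_le_add, ← add_div, le_div_iff₀ hnpos]
        nlinarith
      · filter_upwards [eventually_ge_atTop 1] with n hn
        have hnpos : (0:ℝ) < n := by exact_mod_cast hn
        have h1 : Real.log (setNorm N (prodSet 𝒜 n)) ≤ Real.log ((a * a) * ρ ^ n) :=
          Real.log_le_log (hsnpos n) (hup n)
        rw [Real.log_mul (ne_of_gt haa) (ne_of_gt (pow_pos hρpos n)), Real.log_pow] at h1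
        have h2 : (Real.log ρ + Real.log (a * a) / n) * n
            = n * Real.log ρ + Real.log (a * a) := by
          field_simp
        rw [div_le_iff₀ hnpos, h2]
        linarith
    have htend : Tendsto (fun n : ℕ => setNorm N (prodSet 𝒜 n) ^ ((n : ℝ)⁻¹)) atTop
        (nhds ρ) := by
      have h1 : Tendsto (fun n : ℕ => Real.exp (Real.log (setNorm N (prodSet 𝒜 n)) / n))
          atTop (nhds (Real.exp (Real.log ρ))) :=
        (Real.continuous_exp.tendsto _).comp htendlog
      rw [Real.exp_log hρpos] at h1
      refine h1.congr' ?_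
      filter_upwards [eventually_ge_atTop 1] with n hn
      rw [Real.rpow_def_of_pos (hsnpos n), div_eq_mul_inv]
    rw [jsr]
    exact htend.limsup_eq

end AuxK
/-- Barabanov's theorem: for an irreducible compact set `𝒜`, a real
`ρ ≥ 0` equals the joint spectral radius `ρ(𝒜)` if and only if there is a norm
`‖·‖_b` on `K^d` with `ρ·‖x‖_b = max_{A ∈ 𝒜} ‖A x‖_b` for all `x`. -/
theorem barabanov_characterization {d : ℕ} (hd : 1 ≤ d) {K : Type*} [RCLike K]
    (N : (Fin d → K) → ℝ) (hN : IsNorm N)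
    (𝒜 : Set (Matrix (Fin d) (Fin d) K))
    (h𝒜ne : 𝒜.Nonempty) (h𝒜cp : IsCompact 𝒜) (h𝒜ir : IsIrred 𝒜)
    (ρ : ℝ) (hρ : 0 ≤ ρ) :
    ρ = jsr N 𝒜 ↔ ∃ Nb : (Fin d → K) → ℝ, IsNorm Nb ∧
      ∀ x : Fin d → K, ρ * Nb x = sSup {r : ℝ | ∃ A ∈ 𝒜, r = Nb (A.mulVec x)} := by
  constructor
  · intro hρeq
    by_cases hA0 : ∃ A ∈ 𝒜, A ≠ 0
    · obtain ⟨Nb, h1, h2⟩ := exists_barabanov hN hd h𝒜ne h𝒜cp h𝒜ir hA0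
      exact ⟨Nb, h1, fun x => by rw [hρeq]; exact h2 x⟩
    · push_neg at hA0
      have hprop : ∀ x : Fin d → K,
          (0:ℝ) * N x = sSup {r : ℝ | ∃ A ∈ 𝒜, r = N (A.mulVec x)} := by
        intro x
        have hset : {r : ℝ | ∃ A ∈ 𝒜, r = N (A.mulVec x)} = {0} := by
          ext r
          simp only [Set.mem_setOf_eq, Set.mem_singleton_iff]
          constructor
          · rintro ⟨A, hA, rfl⟩
            rw [hA0 A hA, Matrix.zero_mulVec, hN.zero]
          · rintro rfl
            obtain ⟨A, hA⟩ := h𝒜ne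
            exact ⟨A, hA, by rw [hA0 A hA, Matrix.zero_mulVec, hN.zero]⟩
        rw [hset, csSup_singleton, zero_mul]
      have hjsr0 : jsr N 𝒜 = 0 := backward_core hN hd h𝒜ne h𝒜cp hN le_rfl hprop
      refine ⟨N, hN, fun x => ?_⟩
      rw [hρeq, hjsr0]
      exact hprop x
  · rintro ⟨Nb, hNb, hEq⟩
    exact (backward_core hN hd h𝒜ne h𝒜cp hNb hρ hEq).symm

end JSRPaper
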